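/- arXiv:2402.06324 — 11 statements merged into one kernel-verified Lean document; each statement's English description precedes it below -/
import Mathlib

section
/- Let 0 < p < ∞, let X be a normed space, and let (x_k) be a sequence in X. If (x_k) is strongly p-Cesàro summable to L ∈ X, then (x_k) is statistically convergent to L. -/
open Filter Finset

/-- Strong p-Cesàro summability of a sequence to a limit. -/
def StrongCesaro {X : Type*} [NormedAddCommGroup X] (p : ℝ) (x : ℕ → X) (L : X) : Prop :=
  Tendsto (fun n : ℕ => (n : ℝ)⁻¹ * ∑ k ∈ range n, ‖x k - L‖ ^ p) atTop (nhds 0)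

/-- Statistical convergence: the set of indices where the sequence stays `ε`-far from `L`
has natural density zero, for every `ε > 0`. -/
def StatConv {X : Type*} [NormedAddCommGroup X] (x : ℕ → X) (L : X) : Prop :=
  ∀ ε : ℝ, 0 < ε →
    Tendsto (fun n : ℕ =>
      (((range n).filter fun k => ε ≤ ‖x k - L‖).card : ℝ) / n) atTop (nhds 0)

theorem statement2 {X : Type*} [NormedAddCommGroup X] [NormedSpace ℝ X]
    (p : ℝ) (hp : 0 < p) (x : ℕ → X) (L : X)
    (h : StrongCesaro p x L) : StatConv x L := by
  intro ε hε
  have hεp : (0 : ℝ) < ε ^ p := Real.rpow_pos_of_pos hε p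
  have key : ∀ n : ℕ,
      (((range n).filter fun k => ε ≤ ‖x k - L‖).card : ℝ) / n ≤
        (ε ^ p)⁻¹ * ((n : ℝ)⁻¹ * ∑ k ∈ range n, ‖x k - L‖ ^ p) := by
    intro n
    rcases Nat.eq_zero_or_pos n with rfl | hn
    · simp
    have hn' : (0 : ℝ) < n := by exact_mod_cast hn
    have h1 : (((range n).filter fun k => ε ≤ ‖x k - L‖).card : ℝ) * ε ^ p ≤
        ∑ k ∈ range n, ‖x k - L‖ ^ p := by
      calc (((range n).filter fun k => ε ≤ ‖x k - L‖).card : ℝ) * ε ^ p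
          = ∑ _k ∈ (range n).filter fun k => ε ≤ ‖x k - L‖, ε ^ p := by
            rw [Finset.sum_const, nsmul_eq_mul]
        _ ≤ ∑ k ∈ (range n).filter fun k => ε ≤ ‖x k - L‖, ‖x k - L‖ ^ p :=
            Finset.sum_le_sum fun k hk =>
              Real.rpow_le_rpow hε.le (Finset.mem_filter.mp hk).2 hp.le
        _ ≤ ∑ k ∈ range n, ‖x k - L‖ ^ p :=
            Finset.sum_le_sum_of_subset_of_nonneg (Finset.filter_subset _ _)
              (fun k _ _ => Real.rpow_nonneg (norm_nonneg _) p)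
    have h2 : (((range n).filter fun k => ε ≤ ‖x k - L‖).card : ℝ) / n =
        (ε ^ p)⁻¹ * ((n : ℝ)⁻¹ *
          ((((range n).filter fun k => ε ≤ ‖x k - L‖).card : ℝ) * ε ^ p)) := by
      field_simp
    rw [h2]
    exact mul_le_mul_of_nonneg_left
      (mul_le_mul_of_nonneg_left h1 (by positivity)) (by positivity)
  have hlim : Tendsto (fun n : ℕ =>
      (ε ^ p)⁻¹ * ((n : ℝ)⁻¹ * ∑ k ∈ range n, ‖x k - L‖ ^ p)) atTop (nhds 0) := by
    simpa using h.const_mul (ε ^ p)⁻¹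
  exact squeeze_zero (fun n => by positivity) key hlim
end

section
/- Let 0 < p < ∞, let X be a normed space, and let (x_k) be a bounded sequence in X. If (x_k) is statistically convergent to L ∈ X, then (x_k) is strongly p-Cesàro summable to L. -/
open Filter Finset

theorem statement3 {X : Type*} [NormedAddCommGroup X] [NormedSpace ℝ X]
    (p : ℝ) (hp : 0 < p) (x : ℕ → X) (L : X)
    (hbdd : ∃ C : ℝ, ∀ k, ‖x k‖ ≤ C)
    (h : StatConv x L) : StrongCesaro p x L := by
  obtain ⟨C, hC⟩ := hbdd
  set M : ℝ := C + ‖L‖ + 1 with hMdef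
  have hM1 : (1 : ℝ) ≤ M := by
    have h0 := hC 0
    have h1 := norm_nonneg (x 0)
    have h2 := norm_nonneg L
    simp only [hMdef]; linarith
  have hM0 : (0 : ℝ) < M := lt_of_lt_of_le one_pos hM1
  have hMb : ∀ k, ‖x k - L‖ ≤ M := fun k => by
    calc ‖x k - L‖ ≤ ‖x k‖ + ‖L‖ := norm_sub_le _ _
      _ ≤ M := by have := hC k; simp only [hMdef]; linarith
  have hMp0 : (0 : ℝ) < M ^ p := Real.rpow_pos_of_pos hM0 p
  rw [StrongCesaro, Metric.tendsto_atTop]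
  intro δ hδ
  set ε : ℝ := (δ / 2) ^ (p⁻¹) with hεdef
  have hε0 : 0 < ε := Real.rpow_pos_of_pos (by linarith) _
  have hεp : ε ^ p = δ / 2 := by
    rw [hεdef, ← Real.rpow_mul (by linarith : (0:ℝ) ≤ δ / 2),
      inv_mul_cancel₀ hp.ne', Real.rpow_one]
  obtain ⟨N, hN⟩ := (Metric.tendsto_atTop.mp (h ε hε0)) (δ / (2 * M ^ p))
    (by positivity)
  refine ⟨max N 1, fun n hn => ?_⟩
  have hnN : N ≤ n := le_trans (le_max_left _ _) hn
  have hn1 : 1 ≤ n := le_trans (le_max_right _ _) hn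
  have hn0 : (0 : ℝ) < n := by exact_mod_cast hn1
  set A := (range n).filter fun k => ε ≤ ‖x k - L‖ with hA
  have hcard := hN n hnN
  rw [Real.dist_eq, sub_zero, abs_of_nonneg (by positivity)] at hcard
  have hsum : ∑ k ∈ range n, ‖x k - L‖ ^ p ≤ (A.card : ℝ) * M ^ p + n * ε ^ p := by
    rw [← Finset.sum_filter_add_sum_filter_not (range n) (fun k => ε ≤ ‖x k - L‖)]
    gcongr
    · calc ∑ k ∈ A, ‖x k - L‖ ^ p ≤ ∑ _k ∈ A, M ^ p := by
            refine Finset.sum_le_sum fun k _ => ?_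
            exact Real.rpow_le_rpow (norm_nonneg _) (hMb k) hp.le
        _ = (A.card : ℝ) * M ^ p := by rw [Finset.sum_const, nsmul_eq_mul]
    · calc ∑ k ∈ (range n).filter (fun k => ¬ ε ≤ ‖x k - L‖), ‖x k - L‖ ^ p
          ≤ ∑ _k ∈ (range n).filter (fun k => ¬ ε ≤ ‖x k - L‖), ε ^ p := by
            refine Finset.sum_le_sum fun k hk => ?_
            rw [Finset.mem_filter] at hk
            exact Real.rpow_le_rpow (norm_nonneg _) (le_of_not_ge hk.2) hp.le
        _ = ((Finset.filter (fun k => ¬ ε ≤ ‖x k - L‖) (range n)).card : ℝ) * ε ^ p := by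
            rw [Finset.sum_const, nsmul_eq_mul]
        _ ≤ n * ε ^ p := by
            gcongr
            exact_mod_cast le_trans (Finset.card_filter_le _ _) (by simp)
  have key : (n : ℝ)⁻¹ * ∑ k ∈ range n, ‖x k - L‖ ^ p < δ := by
    calc (n : ℝ)⁻¹ * ∑ k ∈ range n, ‖x k - L‖ ^ p
        ≤ (n : ℝ)⁻¹ * ((A.card : ℝ) * M ^ p + n * ε ^ p) := by gcongr
      _ = ((A.card : ℝ) / n) * M ^ p + ε ^ p := by field_simp
      _ < (δ / (2 * M ^ p)) * M ^ p + δ / 2 := by rw [hεp]; gcongr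
      _ = δ := by field_simp; ring
  rw [Real.dist_eq, sub_zero, abs_of_nonneg (by positivity)]
  exact key
end

section
/- There exists an unbounded real sequence that is statistically convergent to 0 but not strongly p-Cesàro summable to any real number; e.g., for fixed p > 0 the sequence x_k = j^{2/p} if k = j^2 for some j and x_k = 0 otherwise. -/
open Filter Finset

noncomputable def xs (p : ℝ) : ℕ → ℝ :=
  fun k => if Nat.sqrt k ^ 2 = k then ((Nat.sqrt k : ℝ)) ^ (2 / p) else 0

lemma sqrt_sq' (j : ℕ) : Nat.sqrt (j ^ 2) = j := by
  rw [pow_two]; exact Nat.sqrt_eq j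

lemma xs_sq (p : ℝ) (j : ℕ) : xs p (j ^ 2) = (j : ℝ) ^ (2 / p) := by
  simp [xs, sqrt_sq']

lemma xs_nonsq (p : ℝ) {k : ℕ} (h : ¬ Nat.sqrt k ^ 2 = k) : xs p k = 0 := by
  simp [xs, h]

lemma card_sq_le (n : ℕ) :
    ((range n).filter fun k => Nat.sqrt k ^ 2 = k).card ≤ Nat.sqrt n + 1 := by
  have h := Finset.card_le_card_of_injOn (s := (range n).filter fun k => Nat.sqrt k ^ 2 = k)
      (t := range (Nat.sqrt n + 1)) Nat.sqrt ?_ ?_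
  · simpa using h
  · intro a ha
    simp only [mem_coe, mem_filter, mem_range] at ha ⊢
    exact Nat.lt_succ_of_le (Nat.sqrt_le_sqrt ha.1.le)
  · intro a ha b hb hab
    simp only [Finset.coe_filter, Set.mem_setOf_eq, mem_range] at ha hb
    rw [← ha.2, ← hb.2, hab]

lemma tendsto_sqrt_atTop : Tendsto (fun n : ℕ => Nat.sqrt n) atTop atTop := by
  apply tendsto_atTop_atTop.2
  intro b
  exact ⟨b ^ 2, fun a ha => by
    have := Nat.sqrt_le_sqrt ha
    rwa [sqrt_sq'] at this⟩

lemma tendsto_ratio :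
    Tendsto (fun n : ℕ => ((Nat.sqrt n : ℝ) + 1) / n) atTop (nhds 0) := by
  apply squeeze_zero' (g := fun n : ℕ => 2 / (Nat.sqrt n : ℝ))
  · filter_upwards with n
    positivity
  · filter_upwards [eventually_ge_atTop 1] with n hn
    have hs1 : 1 ≤ Nat.sqrt n := by
      have := Nat.sqrt_le_sqrt hn
      simpa using this
    have hs : (1 : ℝ) ≤ (Nat.sqrt n : ℝ) := by exact_mod_cast hs1
    have hsq : ((Nat.sqrt n : ℝ)) ^ 2 ≤ (n : ℝ) := by
      exact_mod_cast Nat.sqrt_le' n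
    have hnpos : (0 : ℝ) < n := by exact_mod_cast hn
    rw [div_le_div_iff₀ hnpos (by linarith)]
    nlinarith
  · exact Tendsto.div_atTop tendsto_const_nhds
      (tendsto_natCast_atTop_atTop.comp tendsto_sqrt_atTop)

theorem statement4 (p : ℝ) (hp : 0 < p) :
    ∃ x : ℕ → ℝ, ¬ BddAbove (Set.range fun k => |x k|) ∧
      StatConv x 0 ∧ ∀ L : ℝ, ¬ StrongCesaro p x L := by
  have h2p : 0 < 2 / p := by positivity
  refine ⟨xs p, ?_, ?_, ?_⟩
  · -- unbounded
    rintro ⟨M, hM⟩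
    have htend : Tendsto (fun j : ℕ => (j : ℝ) ^ (2 / p)) atTop atTop :=
      (tendsto_rpow_atTop h2p).comp tendsto_natCast_atTop_atTop
    obtain ⟨j, hj⟩ := (htend.eventually_gt_atTop M).exists
    have : |xs p (j ^ 2)| ≤ M := hM ⟨j ^ 2, rfl⟩
    rw [xs_sq, abs_of_nonneg (Real.rpow_nonneg (Nat.cast_nonneg j) _)] at this
    exact absurd this (not_le.2 hj)
  · -- statistical convergence to 0
    intro ε hε
    apply squeeze_zero' (g := fun n : ℕ => ((Nat.sqrt n : ℝ) + 1) / n)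
    · filter_upwards with n; positivity
    · filter_upwards with n
      have hsub : ((range n).filter fun k => ε ≤ ‖xs p k - 0‖) ⊆
          ((range n).filter fun k => Nat.sqrt k ^ 2 = k) := by
        intro k hk
        simp only [mem_filter] at hk ⊢
        refine ⟨hk.1, ?_⟩
        by_contra h
        rw [xs_nonsq p h] at hk
        simp at hk
        linarith [hk.2]
      have h1 : (((range n).filter fun k => ε ≤ ‖xs p k - 0‖).card : ℝ) ≤
          (Nat.sqrt n : ℝ) + 1 := by
        exact_mod_cast (Finset.card_le_card hsub).trans (card_sq_le n)
      rcases Nat.eq_zero_or_pos n with h0 | h0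
      · simp [h0]
      · gcongr
    · exact tendsto_ratio
  · -- not strongly Cesàro
    intro L hT
    have hnonneg : ∀ k, 0 ≤ ‖xs p k - L‖ ^ p := fun k => Real.rpow_nonneg (norm_nonneg _) p
    by_cases hL : L = 0
    · subst hL
      have h2 := hT.eventually_lt_const (show (0:ℝ) < 1/2 by norm_num)
      obtain ⟨N, hN⟩ := eventually_atTop.1 h2
      set m := N + 1 with hm
      set n := m ^ 2 + 1 with hn
      have hnN : N ≤ n := by
        have : m ≤ m ^ 2 := Nat.le_self_pow (by norm_num) m
        omega
      have hval := hN n hnN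
      have hterm : ((m : ℝ)) ^ (2 : ℕ) ≤ ∑ k ∈ range n, ‖xs p k - 0‖ ^ p := by
        have hmem : m ^ 2 ∈ range n := by simp [hn]
        have := Finset.single_le_sum (f := fun k => ‖xs p k - 0‖ ^ p)
          (fun i _ => hnonneg i) hmem
        have heq : ‖xs p (m ^ 2) - 0‖ ^ p = ((m : ℝ)) ^ (2 : ℕ) := by
          rw [sub_zero, xs_sq, Real.norm_eq_abs,
            abs_of_nonneg (Real.rpow_nonneg (Nat.cast_nonneg m) _),
            ← Real.rpow_natCast ((m : ℝ)) 2, ← Real.rpow_mul (Nat.cast_nonneg m)]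
          congr 1
          field_simp
          norm_num
        calc ((m:ℝ)) ^ (2:ℕ) = ‖xs p (m ^ 2) - 0‖ ^ p := heq.symm
          _ ≤ _ := this
      have hnpos : (0 : ℝ) < (n : ℝ) := by positivity
      have hge : (1 : ℝ) / 2 ≤ (n : ℝ)⁻¹ * ∑ k ∈ range n, ‖xs p k - 0‖ ^ p := by
        have h1 : (n : ℝ)⁻¹ * ((m : ℝ)) ^ (2 : ℕ) ≤
            (n : ℝ)⁻¹ * ∑ k ∈ range n, ‖xs p k - 0‖ ^ p :=
          mul_le_mul_of_nonneg_left hterm (by positivity)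
        have hcast : (n : ℝ) = (m : ℝ) ^ 2 + 1 := by
          rw [hn]; push_cast; ring
        have hm1 : (1 : ℝ) ≤ (m : ℝ) := by exact_mod_cast Nat.le_add_left 1 N
        have h2' : (1 : ℝ) / 2 ≤ (n : ℝ)⁻¹ * ((m : ℝ)) ^ (2 : ℕ) := by
          rw [hcast, inv_mul_eq_div, le_div_iff₀ (by nlinarith)]
          nlinarith
        linarith
      linarith
    · -- L ≠ 0
      have hc : 0 < |L| ^ p := Real.rpow_pos_of_pos (abs_pos.2 hL) p
      set c := |L| ^ p with hcdef
      have h2 := hT.eventually_lt_const (show 0 < c / 2 by positivity)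
      have h3 := tendsto_ratio.eventually_lt_const (show (0:ℝ) < 1/2 by norm_num)
      obtain ⟨n, hval, hrat, hn1⟩ := (h2.and (h3.and (eventually_ge_atTop 1))).exists
      have hnpos : (0 : ℝ) < (n : ℝ) := by exact_mod_cast hn1
      set S := (range n).filter fun k => ¬ Nat.sqrt k ^ 2 = k with hS
      have hsum : (S.card : ℝ) * c ≤ ∑ k ∈ range n, ‖xs p k - L‖ ^ p := by
        have h1 : ∑ k ∈ S, ‖xs p k - L‖ ^ p = (S.card : ℝ) * c := by
          rw [Finset.sum_congr rfl (fun k hk => ?_), Finset.sum_const, nsmul_eq_mul]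
          simp only [hS, mem_filter] at hk
          rw [xs_nonsq p hk.2, zero_sub, norm_neg, Real.norm_eq_abs]
        rw [← h1]
        exact Finset.sum_le_sum_of_subset_of_nonneg (Finset.filter_subset _ _)
          (fun i _ _ => hnonneg i)
      have hcard : (n : ℝ) - ((Nat.sqrt n : ℝ) + 1) ≤ (S.card : ℝ) := by
        have h4 := Finset.card_filter_add_card_filter_not
          (s := range n) (p := fun k => Nat.sqrt k ^ 2 = k)
        have h5 := card_sq_le n
        have h6 : (((range n).filter fun k => Nat.sqrt k ^ 2 = k).card : ℝ) + (S.card : ℝ)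
            = (n : ℝ) := by
          rw [hS]; exact_mod_cast (by simpa using h4)
        have h7 : (((range n).filter fun k => Nat.sqrt k ^ 2 = k).card : ℝ) ≤
            (Nat.sqrt n : ℝ) + 1 := by exact_mod_cast h5
        linarith
      have hlow : (1 - ((Nat.sqrt n : ℝ) + 1) / n) * c ≤
          (n : ℝ)⁻¹ * ∑ k ∈ range n, ‖xs p k - L‖ ^ p := by
        have h8 : ((n : ℝ) - ((Nat.sqrt n : ℝ) + 1)) * c ≤ (S.card : ℝ) * c :=
          mul_le_mul_of_nonneg_right hcard hc.le
        have h9 : (n : ℝ)⁻¹ * (((n : ℝ) - ((Nat.sqrt n : ℝ) + 1)) * c) ≤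
            (n : ℝ)⁻¹ * ∑ k ∈ range n, ‖xs p k - L‖ ^ p :=
          mul_le_mul_of_nonneg_left (h8.trans hsum) (by positivity)
        have h10 : (n : ℝ)⁻¹ * (((n : ℝ) - ((Nat.sqrt n : ℝ) + 1)) * c) =
            (1 - ((Nat.sqrt n : ℝ) + 1) / n) * c := by
          field_simp
        linarith [h9, h10.symm.le]
      nlinarith [hval, hrat, hc, hlow]
end

section
/- The real sequence defined by x_k = r^2 if k = r^3 for some r ∈ ℕ and x_k = 0 otherwise is strongly (1/2)-Cesàro summable to 0, but its Cesàro means (1/n) ∑_{k=1}^n x_k do not converge to 0. -/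
open Filter Finset

open Classical in
/-- `x k = r ^ 2` if `k = r ^ 3` for some `r`, else `0`. -/
noncomputable def cubeSqSeq (k : ℕ) : ℝ :=
  if h : ∃ r : ℕ, k = r ^ 3 then ((h.choose : ℝ) ^ 2) else 0

lemma cubeSqSeq_cube (r : ℕ) : cubeSqSeq (r ^ 3) = (r : ℝ) ^ 2 := by
  have h : ∃ s : ℕ, r ^ 3 = s ^ 3 := ⟨r, rfl⟩
  have hs : r ^ 3 = h.choose ^ 3 := h.choose_spec
  have hcr : h.choose = r := Nat.pow_left_injective (by norm_num) hs.symm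
  simp [cubeSqSeq, dif_pos h, hcr]

lemma cubeSqSeq_not_cube (k : ℕ) (h : ¬∃ r : ℕ, k = r ^ 3) : cubeSqSeq k = 0 := by
  simp [cubeSqSeq, dif_neg h]

lemma key_sum (G : ℝ → ℝ) (hG0 : G 0 = 0) (n : ℕ) :
    ∑ k ∈ range n, G (cubeSqSeq k)
      = ∑ r ∈ (range n).filter (fun r => r ^ 3 < n), G ((r : ℝ) ^ 2) := by
  classical
  rw [← Finset.sum_filter_add_sum_filter_not (range n) (fun k => ∃ r : ℕ, k = r ^ 3)]
  have h2 : ∑ k ∈ (range n).filter (fun k => ¬∃ r : ℕ, k = r ^ 3), G (cubeSqSeq k) = 0 := by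
    apply Finset.sum_eq_zero
    intro k hk
    rw [Finset.mem_filter] at hk
    rw [cubeSqSeq_not_cube k hk.2, hG0]
  rw [h2, add_zero]
  refine (Finset.sum_bij (fun (r : ℕ) _ => r ^ 3) ?_ ?_ ?_ ?_).symm
  · intro r hr
    rw [Finset.mem_filter] at hr ⊢
    exact ⟨Finset.mem_range.mpr hr.2, ⟨r, rfl⟩⟩
  · intro a _ b _ hab
    exact Nat.pow_left_injective (by norm_num) hab
  · intro k hk
    rw [Finset.mem_filter, Finset.mem_range] at hk
    obtain ⟨hkn, r, rfl⟩ := hk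
    refine ⟨r, ?_, rfl⟩
    rw [Finset.mem_filter, Finset.mem_range]
    exact ⟨lt_of_le_of_lt (Nat.le_self_pow (by norm_num) r) hkn, hkn⟩
  · intro r _
    rw [cubeSqSeq_cube]

lemma sq_sum_lower (m : ℕ) : (m : ℝ) ^ 3 / 3 ≤ ∑ r ∈ range (m + 1), (r : ℝ) ^ 2 := by
  induction m with
  | zero => simp
  | succ m ih =>
    rw [Finset.sum_range_succ]
    push_cast
    push_cast at ih
    nlinarith [ih, (Nat.cast_nonneg m : (0:ℝ) ≤ (m:ℝ))]

theorem statement6 :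
    StrongCesaro ((1 : ℝ) / 2) cubeSqSeq 0 ∧
    ¬ Tendsto (fun n : ℕ => (n : ℝ)⁻¹ * ∑ k ∈ range n, cubeSqSeq k) atTop (nhds 0) := by
  constructor
  · -- strong Cesàro
    unfold StrongCesaro
    have hsum : ∀ n : ℕ, ∑ k ∈ range n, ‖cubeSqSeq k - 0‖ ^ ((1:ℝ)/2)
        = ∑ r ∈ (range n).filter (fun r => r ^ 3 < n), (r : ℝ) := by
      intro n
      have h := key_sum (fun t => ‖t - 0‖ ^ ((1:ℝ)/2)) (by simp) n
      rw [h]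
      apply Finset.sum_congr rfl
      intro r _
      rw [sub_zero, Real.norm_eq_abs, abs_of_nonneg (by positivity)]
      rw [← Real.rpow_natCast (r : ℝ) 2, ← Real.rpow_mul (Nat.cast_nonneg r)]
      norm_num
    apply squeeze_zero' (g := fun n : ℕ => 4 * (n : ℝ) ^ (-(1:ℝ)/3))
    · filter_upwards with n
      have h0 : (0:ℝ) ≤ ∑ k ∈ range n, ‖cubeSqSeq k - 0‖ ^ ((1:ℝ)/2) := by
        apply Finset.sum_nonneg; intro k _; positivity
      positivity
    · filter_upwards [eventually_ge_atTop 1] with n hn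
      rw [hsum n]
      have hn1 : (1:ℝ) ≤ (n:ℝ) := by exact_mod_cast hn
      set t : ℝ := (n : ℝ) ^ ((1:ℝ)/3) with ht
      have ht1 : 1 ≤ t := Real.one_le_rpow hn1 (by norm_num)
      have htpos : 0 < t := lt_of_lt_of_le one_pos ht1
      have htn : t ^ 3 = (n : ℝ) := by
        rw [ht, ← Real.rpow_natCast ((n:ℝ) ^ ((1:ℝ)/3)) 3, ← Real.rpow_mul (by positivity)]
        norm_num
      set B := (range n).filter (fun r => r ^ 3 < n) with hB
      have hmem : ∀ r ∈ B, (r : ℝ) ≤ t := by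
        intro r hr
        rw [hB, Finset.mem_filter] at hr
        have hr3 : ((r:ℝ)) ^ 3 < (n : ℝ) := by exact_mod_cast hr.2
        by_contra hc
        push_neg at hc
        have := pow_lt_pow_left₀ hc (by positivity : (0:ℝ) ≤ t) (by norm_num : 3 ≠ 0)
        rw [htn] at this
        linarith
      have hcard : (B.card : ℝ) ≤ t + 1 := by
        have hsub : B ⊆ range (Nat.floor t + 1) := by
          intro r hr
          rw [Finset.mem_range, Nat.lt_succ_iff]
          exact Nat.le_floor (hmem r hr)
        have h1 : B.card ≤ Nat.floor t + 1 := by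
          simpa using Finset.card_le_card hsub
        calc (B.card : ℝ) ≤ ((Nat.floor t + 1 : ℕ) : ℝ) := by exact_mod_cast h1
          _ ≤ t + 1 := by
              push_cast
              have := Nat.floor_le (le_of_lt htpos)
              linarith
      have hS : ∑ r ∈ B, (r : ℝ) ≤ (t + 1) * t := by
        calc ∑ r ∈ B, (r : ℝ) ≤ B.card • t := Finset.sum_le_card_nsmul _ _ _ hmem
          _ = (B.card : ℝ) * t := by rw [nsmul_eq_mul]
          _ ≤ (t + 1) * t := by
              apply mul_le_mul_of_nonneg_right hcard (le_of_lt htpos)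
      have hinv : (n:ℝ) ^ (-(1:ℝ)/3) = t⁻¹ := by
        rw [neg_div, Real.rpow_neg (by positivity), ht]
      rw [hinv, ← htn]
      calc (t ^ 3)⁻¹ * ∑ r ∈ B, (r : ℝ) ≤ (t ^ 3)⁻¹ * ((t + 1) * t) := by
            apply mul_le_mul_of_nonneg_left hS (by positivity)
        _ ≤ (t ^ 3)⁻¹ * (2 * t ^ 2) := by
            apply mul_le_mul_of_nonneg_left (by nlinarith) (by positivity)
        _ = 2 * t⁻¹ := by field_simp
        _ ≤ 4 * t⁻¹ := by
            have h0 : (0:ℝ) ≤ t⁻¹ := by positivity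
            linarith
    · have h : Tendsto (fun x : ℝ => 4 * x ^ (-(1:ℝ)/3)) atTop (nhds 0) := by
        have h1 := tendsto_rpow_neg_atTop (y := (1:ℝ)/3) (by norm_num)
        have h2 := h1.const_mul (4:ℝ)
        simpa [neg_div, mul_zero] using h2
      exact h.comp tendsto_natCast_atTop_atTop
  · -- not Cesàro
    intro h
    have hcomp : Tendsto (fun m : ℕ =>
        ((m ^ 3 + 1 : ℕ) : ℝ)⁻¹ * ∑ k ∈ range (m ^ 3 + 1), cubeSqSeq k) atTop (nhds 0) :=
      h.comp (tendsto_atTop_mono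
        (fun m => le_trans (Nat.le_self_pow (by norm_num) m) (Nat.le_succ _)) tendsto_id)
    have hev := hcomp.eventually (gt_mem_nhds (show (0:ℝ) < 1/6 by norm_num))
    have hge : ∀ᶠ m : ℕ in atTop, (1:ℝ)/6 ≤
        ((m ^ 3 + 1 : ℕ) : ℝ)⁻¹ * ∑ k ∈ range (m ^ 3 + 1), cubeSqSeq k := by
      filter_upwards [eventually_ge_atTop 1] with m hm
      have hset : (range (m ^ 3 + 1)).filter (fun r => r ^ 3 < m ^ 3 + 1) = range (m + 1) := by
        ext r
        simp only [Finset.mem_filter, Finset.mem_range]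
        constructor
        · rintro ⟨_, h2⟩
          have h3 : r ^ 3 ≤ m ^ 3 := Nat.lt_succ_iff.mp h2
          exact Nat.lt_succ_iff.mpr ((Nat.pow_le_pow_iff_left (by norm_num)).mp h3)
        · intro hr
          have hrm : r ≤ m := Nat.lt_succ_iff.mp hr
          have h3 : r ^ 3 ≤ m ^ 3 := Nat.pow_le_pow_left hrm 3
          exact ⟨Nat.lt_succ_of_le (le_trans (Nat.le_self_pow (by norm_num) r) h3),
            Nat.lt_succ_of_le h3⟩
      have hsum : ∑ k ∈ range (m ^ 3 + 1), cubeSqSeq k = ∑ r ∈ range (m + 1), (r : ℝ) ^ 2 := by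
        have h := key_sum (fun t => t) rfl (m ^ 3 + 1)
        rwa [hset] at h
      rw [hsum]
      have hlow := sq_sum_lower m
      have hm1 : (1:ℝ) ≤ (m:ℝ) := by exact_mod_cast hm
      have hcast : ((m ^ 3 + 1 : ℕ) : ℝ) = (m:ℝ) ^ 3 + 1 := by push_cast; ring
      have hpos2 : (0:ℝ) < (m:ℝ) ^ 3 + 1 := by positivity
      rw [hcast, inv_mul_eq_div, le_div_iff₀ hpos2]
      have hm3 : (1:ℝ) ≤ (m:ℝ) ^ 3 := by
        calc (1:ℝ) = 1 ^ 3 := by norm_num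
          _ ≤ (m:ℝ) ^ 3 := pow_le_pow_left₀ (by norm_num) hm1 3
      linarith [hlow, hm3]
    obtain ⟨m, h1, h2⟩ := (hev.and hge).exists
    linarith
end

section
/- Let X be a real Banach space, 0 < p < ∞, and ∑_i x_i a series in X. If ∑_i x_i is weakly unconditionally Cauchy, then the space S_{w_p}(∑ x_i) = {(a_i) ∈ ℓ_∞ : the partial sums ∑_{i=1}^n a_i x_i form a strongly p-Cesàro summable sequence}, endowed with the supremum norm, is a complete (closed in ℓ_∞) normed space. -/
open Filter Finset BoundedContinuousFunction

noncomputable def clip (t : ℝ) : ℝ := max (-1) (min 1 t)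

lemma abs_clip_le (t : ℝ) : |clip t| ≤ 1 := by
  rw [abs_le]
  exact ⟨le_max_left _ _, max_le (by norm_num) (min_le_left _ _)⟩

lemma clip_one : clip 1 = 1 := by norm_num [clip]
lemma clip_neg_one : clip (-1) = -1 := by norm_num [clip]

lemma wuc_bound {X : Type*} [NormedAddCommGroup X] [NormedSpace ℝ X]
    (x : ℕ → X) (hwuc : ∀ f : X →L[ℝ] ℝ, Summable fun i => |f (x i)|) :
    ∃ C : ℝ, 0 ≤ C ∧ ∀ (b : ℕ → ℝ) (B : ℝ) (n : ℕ), 0 ≤ B → (∀ i, |b i| ≤ B) →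
      ‖∑ i ∈ range n, b i • x i‖ ≤ C * B := by
  set g : ℕ × (ℕ → ℝ) → (X →L[ℝ] ℝ) →L[ℝ] ℝ := fun q =>
    ∑ i ∈ range q.1, clip (q.2 i) • (ContinuousLinearMap.apply ℝ ℝ (x i))
  have hgval : ∀ q f, g q f = ∑ i ∈ range q.1, clip (q.2 i) * f (x i) := by
    intro q f
    simp [g, ContinuousLinearMap.sum_apply]
  have hpt : ∀ f : X →L[ℝ] ℝ, ∃ Cf, ∀ q, ‖g q f‖ ≤ Cf := by
    intro f
    refine ⟨∑' i, |f (x i)|, fun q => ?_⟩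
    rw [hgval]
    calc ‖∑ i ∈ range q.1, clip (q.2 i) * f (x i)‖
        ≤ ∑ i ∈ range q.1, ‖clip (q.2 i) * f (x i)‖ := norm_sum_le _ _
      _ ≤ ∑ i ∈ range q.1, |f (x i)| := by
          refine Finset.sum_le_sum fun i _ => ?_
          rw [Real.norm_eq_abs, abs_mul]
          calc |clip (q.2 i)| * |f (x i)| ≤ 1 * |f (x i)| :=
                mul_le_mul_of_nonneg_right (abs_clip_le _) (abs_nonneg _)
            _ = |f (x i)| := one_mul _
      _ ≤ ∑' i, |f (x i)| :=
          Summable.sum_le_tsum _ (fun i _ => abs_nonneg _) (hwuc f)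
  obtain ⟨C', hC'⟩ := banach_steinhaus hpt
  have habs : ∀ (f : X →L[ℝ] ℝ) (n : ℕ), ∑ i ∈ range n, |f (x i)| ≤ C' * ‖f‖ := by
    intro f n
    set ε : ℕ → ℝ := fun i => if 0 ≤ f (x i) then 1 else -1
    have : ∑ i ∈ range n, |f (x i)| = g (n, ε) f := by
      rw [hgval]
      refine Finset.sum_congr rfl fun i _ => ?_
      by_cases h : 0 ≤ f (x i)
      · simp [ε, h, clip_one, abs_of_nonneg h]
      · simp [ε, h, clip_neg_one, abs_of_neg (lt_of_not_ge h)]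
    rw [this]
    calc g (n, ε) f ≤ ‖g (n, ε) f‖ := le_abs_self _
      _ ≤ ‖g (n, ε)‖ * ‖f‖ := (g (n, ε)).le_opNorm f
      _ ≤ C' * ‖f‖ := mul_le_mul_of_nonneg_right (hC' _) (norm_nonneg _)
  refine ⟨max C' 0, le_max_right _ _, fun b B n hB hb => ?_⟩
  refine NormedSpace.norm_le_dual_bound ℝ _ (by positivity) fun f => ?_
  have : f (∑ i ∈ range n, b i • x i) = ∑ i ∈ range n, b i * f (x i) := by
    simp
  rw [Real.norm_eq_abs, this]
  calc |∑ i ∈ range n, b i * f (x i)| ≤ ∑ i ∈ range n, |b i * f (x i)| :=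
        Finset.abs_sum_le_sum_abs _ _
    _ ≤ ∑ i ∈ range n, B * |f (x i)| := by
        refine Finset.sum_le_sum fun i _ => ?_
        rw [abs_mul]
        exact mul_le_mul_of_nonneg_right (hb i) (abs_nonneg _)
    _ = B * ∑ i ∈ range n, |f (x i)| := by rw [Finset.mul_sum]
    _ ≤ B * (C' * ‖f‖) := mul_le_mul_of_nonneg_left (habs f n) hB
    _ ≤ B * (max C' 0 * ‖f‖) := by
        have h2 : C' * ‖f‖ ≤ max C' 0 * ‖f‖ :=
          mul_le_mul_of_nonneg_right (le_max_left _ _) (norm_nonneg _)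
        exact mul_le_mul_of_nonneg_left h2 hB
    _ = max C' 0 * B * ‖f‖ := by ring

lemma exists_small {t : ℕ → ℝ} (ht : ∀ k, 0 ≤ t k)
    (h : Tendsto (fun n : ℕ => (n : ℝ)⁻¹ * ∑ k ∈ range n, t k) atTop (nhds 0))
    {ε : ℝ} (hε : 0 < ε) : ∃ k, t k < ε := by
  by_contra hc
  push_neg at hc
  have hev : ∀ᶠ n : ℕ in atTop, ε ≤ (n : ℝ)⁻¹ * ∑ k ∈ range n, t k := by
    filter_upwards [eventually_ge_atTop 1] with n hn
    have hn' : (0 : ℝ) < n := by exact_mod_cast hn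
    have h1 : (n : ℝ) * ε ≤ ∑ k ∈ range n, t k := by
      calc (n : ℝ) * ε = ∑ _k ∈ range n, ε := by simp [mul_comm]
        _ ≤ _ := Finset.sum_le_sum fun k _ => hc k
    calc ε = (n : ℝ)⁻¹ * ((n : ℝ) * ε) := by field_simp
      _ ≤ _ := mul_le_mul_of_nonneg_left h1 (by positivity)
  have := ge_of_tendsto h hev
  linarith

lemma rpow_add_le {p : ℝ} (hp : 0 < p) {u v : ℝ} (hu : 0 ≤ u) (hv : 0 ≤ v) :
    (u + v) ^ p ≤ 2 ^ p * (u ^ p + v ^ p) := by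
  have h1 : u + v ≤ 2 * max u v := by
    rcases le_total u v with h | h
    · rw [max_eq_right h]; linarith
    · rw [max_eq_left h]; linarith
  have hmax : (0 : ℝ) ≤ max u v := le_trans hu (le_max_left _ _)
  calc (u + v) ^ p ≤ (2 * max u v) ^ p := Real.rpow_le_rpow (by linarith) h1 hp.le
    _ = 2 ^ p * (max u v) ^ p := Real.mul_rpow (by norm_num) hmax
    _ ≤ 2 ^ p * (u ^ p + v ^ p) := by
        refine mul_le_mul_of_nonneg_left ?_ (Real.rpow_nonneg (by norm_num) _)
        rcases le_total u v with h | h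
        · rw [max_eq_right h]
          nlinarith [Real.rpow_nonneg hu p]
        · rw [max_eq_left h]
          nlinarith [Real.rpow_nonneg hv p]

lemma lt_of_rpow_lt {p : ℝ} (hp : 0 < p) {u v : ℝ} (hv : 0 ≤ v)
    (h : u ^ p < v ^ p) : u < v := by
  by_contra hc
  push_neg at hc
  exact absurd h (not_lt.mpr (Real.rpow_le_rpow hv hc hp.le))

/-- The `w_p`-summability space of a series, viewed inside `ℓ∞ = (ℕ →ᵇ ℝ)`. -/
def SwpSpace {X : Type*} [NormedAddCommGroup X] [NormedSpace ℝ X]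
    (p : ℝ) (x : ℕ → X) : Set (ℕ →ᵇ ℝ) :=
  {a : ℕ →ᵇ ℝ | ∃ L : X, StrongCesaro p (fun n => ∑ i ∈ range n, a i • x i) L}

theorem statement9 {X : Type*} [NormedAddCommGroup X] [NormedSpace ℝ X] [CompleteSpace X]
    (p : ℝ) (hp : 0 < p) (x : ℕ → X)
    (hwuc : ∀ f : X →L[ℝ] ℝ, Summable fun i => |f (x i)|) :
    IsComplete (SwpSpace p x) := by
  obtain ⟨C, hC0, hC⟩ := wuc_bound x hwuc
  -- the partial-sum operator
  set s : (ℕ →ᵇ ℝ) → ℕ → X := fun b k => ∑ i ∈ range k, b i • x i with hs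
  have hkey : ∀ (b c : ℕ →ᵇ ℝ) (k : ℕ), ‖s b k - s c k‖ ≤ C * ‖b - c‖ := by
    intro b c k
    have heq : s b k - s c k = ∑ i ∈ range k, ((b : ℕ → ℝ) i - c i) • x i := by
      rw [hs]
      simp [sub_smul, Finset.sum_sub_distrib]
    rw [heq]
    refine hC _ _ _ (norm_nonneg _) fun i => ?_
    have := (b - c).norm_coe_le_norm i
    simpa [Real.norm_eq_abs] using this
  refine IsSeqClosed.isClosed ?_ |>.isComplete
  intro a A ha hA
  choose L hL using ha
  -- distance bound between Cesàro limits
  have hLdist : ∀ m m', ‖L m - L m'‖ ≤ C * ‖a m - a m'‖ := by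
    intro m m'
    refine le_of_forall_pos_le_add fun ε hε => ?_
    have hsum : Tendsto (fun n : ℕ => (n : ℝ)⁻¹ * ∑ k ∈ range n,
        (‖s (a m) k - L m‖ ^ p + ‖s (a m') k - L m'‖ ^ p)) atTop (nhds 0) := by
      have h2 := (hL m).add (hL m')
      rw [add_zero] at h2
      refine h2.congr fun n => ?_
      rw [← mul_add, ← Finset.sum_add_distrib]
    have hεp : (0 : ℝ) < (ε / 2) ^ p := Real.rpow_pos_of_pos (by linarith) p
    obtain ⟨k, hk⟩ := exists_small
      (t := fun k => ‖s (a m) k - L m‖ ^ p + ‖s (a m') k - L m'‖ ^ p)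
      (fun k => by positivity) hsum hεp
    have h1 : ‖s (a m) k - L m‖ < ε / 2 := by
      refine lt_of_rpow_lt hp (by linarith) ?_
      have := Real.rpow_nonneg (norm_nonneg (s (a m') k - L m')) p
      linarith
    have h2 : ‖s (a m') k - L m'‖ < ε / 2 := by
      refine lt_of_rpow_lt hp (by linarith) ?_
      have := Real.rpow_nonneg (norm_nonneg (s (a m) k - L m)) p
      linarith
    have hsplit : L m - L m' =
        (L m - s (a m) k) + (s (a m) k - s (a m') k) + (s (a m') k - L m') := by abel
    calc ‖L m - L m'‖
        ≤ ‖L m - s (a m) k‖ + ‖s (a m) k - s (a m') k‖ + ‖s (a m') k - L m'‖ := by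
          rw [hsplit]; exact norm_add₃_le
      _ ≤ ε / 2 + C * ‖a m - a m'‖ + ε / 2 := by
          have h3 := hkey (a m) (a m') k
          rw [norm_sub_rev] at h1
          gcongr
      _ = C * ‖a m - a m'‖ + ε := by ring
  -- the Cesàro limits form a Cauchy sequence
  have hcauchy : CauchySeq L := by
    rw [Metric.cauchySeq_iff]
    intro ε hε
    have haC : CauchySeq a := hA.cauchySeq
    rw [Metric.cauchySeq_iff] at haC
    obtain ⟨N, hN⟩ := haC (ε / (C + 1)) (by positivity)
    refine ⟨N, fun m hm m' hm' => ?_⟩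
    calc dist (L m) (L m') = ‖L m - L m'‖ := dist_eq_norm _ _
      _ ≤ C * ‖a m - a m'‖ := hLdist m m'
      _ = C * dist (a m) (a m') := by rw [dist_eq_norm]
      _ ≤ C * (ε / (C + 1)) :=
          mul_le_mul_of_nonneg_left (hN m hm m' hm').le hC0
      _ < (C + 1) * (ε / (C + 1)) :=
          mul_lt_mul_of_pos_right (lt_add_one C) (by positivity)
      _ = ε := by field_simp
  obtain ⟨Llim, hLlim⟩ := cauchySeq_tendsto_of_complete hcauchy
  refine ⟨Llim, ?_⟩
  rw [StrongCesaro, Metric.tendsto_atTop]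
  intro ε hε
  have h2p : (0 : ℝ) < 2 ^ p := Real.rpow_pos_of_pos (by norm_num) p
  set η : ℝ := (ε / (2 * 2 ^ p)) ^ p⁻¹ with hη
  have hηpos : 0 < η := Real.rpow_pos_of_pos (by positivity) _
  have hηp : η ^ p = ε / (2 * 2 ^ p) := by
    rw [hη, ← Real.rpow_mul (by positivity), inv_mul_cancel₀ hp.ne', Real.rpow_one]
  obtain ⟨m, hm1, hm2⟩ : ∃ m, ‖A - a m‖ < η / (2 * (C + 1)) ∧ ‖L m - Llim‖ < η / 2 := by
    have t1 : Tendsto (fun m => ‖A - a m‖) atTop (nhds 0) := by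
      have := tendsto_iff_norm_sub_tendsto_zero.mp hA
      refine this.congr fun m => ?_
      rw [norm_sub_rev]
    have t2 : Tendsto (fun m => ‖L m - Llim‖) atTop (nhds 0) :=
      tendsto_iff_norm_sub_tendsto_zero.mp hLlim
    have e1 := t1.eventually_lt_const (show (0:ℝ) < η / (2 * (C + 1)) by positivity)
    have e2 := t2.eventually_lt_const (show (0:ℝ) < η / 2 by positivity)
    exact (e1.and e2).exists
  set δ : ℝ := C * ‖A - a m‖ + ‖L m - Llim‖ with hδ
  have hδ0 : 0 ≤ δ := by positivity
  have hδη : δ < η := by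
    have hc1 : C * ‖A - a m‖ ≤ C * (η / (2 * (C + 1))) :=
      mul_le_mul_of_nonneg_left hm1.le hC0
    have hc2 : C * (η / (2 * (C + 1))) < η / 2 := by
      have hC1 : C + 1 ≠ 0 := by positivity
      calc C * (η / (2 * (C + 1))) < (C + 1) * (η / (2 * (C + 1))) :=
            mul_lt_mul_of_pos_right (lt_add_one C) (by positivity)
        _ = η / 2 := by field_simp
    rw [hδ]
    linarith
  have hδp : 2 ^ p * δ ^ p < ε / 2 := by
    have : δ ^ p < η ^ p := by
      rcases eq_or_lt_of_le hδ0 with h | h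
      · rw [← h, Real.zero_rpow hp.ne']
        exact Real.rpow_pos_of_pos hηpos p
      · exact Real.rpow_lt_rpow hδ0 hδη hp
    rw [hηp] at this
    calc 2 ^ p * δ ^ p < 2 ^ p * (ε / (2 * 2 ^ p)) :=
        mul_lt_mul_of_pos_left this h2p
      _ = ε / 2 := by field_simp
  -- termwise bound
  have hterm : ∀ k, ‖s A k - Llim‖ ^ p ≤
      2 ^ p * δ ^ p + 2 ^ p * (‖s (a m) k - L m‖ ^ p) := by
    intro k
    set t := ‖s (a m) k - L m‖ with ht
    have htri : ‖s A k - Llim‖ ≤ δ + t := by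
      have hsplit : s A k - Llim =
          (s A k - s (a m) k) + (s (a m) k - L m) + (L m - Llim) := by abel
      calc ‖s A k - Llim‖
          ≤ ‖s A k - s (a m) k‖ + ‖s (a m) k - L m‖ + ‖L m - Llim‖ := by
            rw [hsplit]; exact norm_add₃_le
        _ ≤ C * ‖A - a m‖ + t + ‖L m - Llim‖ := by
            have := hkey A (a m) k
            gcongr
        _ = δ + t := by rw [hδ]; ring
    calc ‖s A k - Llim‖ ^ p ≤ (δ + t) ^ p :=
        Real.rpow_le_rpow (norm_nonneg _) htri hp.le
      _ ≤ 2 ^ p * (δ ^ p + t ^ p) := rpow_add_le hp hδ0 (norm_nonneg _)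
      _ = 2 ^ p * δ ^ p + 2 ^ p * t ^ p := by ring
  -- use Cesàro convergence for a m
  have hLm := hL m
  rw [StrongCesaro, Metric.tendsto_atTop] at hLm
  obtain ⟨N, hN⟩ := hLm (η ^ p) (by positivity)
  refine ⟨N, fun n hn => ?_⟩
  have havg_nonneg : 0 ≤ (n : ℝ)⁻¹ * ∑ k ∈ range n, ‖s A k - Llim‖ ^ p := by
    have : ∀ k ∈ range n, (0:ℝ) ≤ ‖s A k - Llim‖ ^ p := fun k _ =>
      Real.rpow_nonneg (norm_nonneg _) p
    positivity
  rw [Real.dist_eq, sub_zero, abs_of_nonneg havg_nonneg]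
  have hNn := hN n hn
  rw [Real.dist_eq, sub_zero] at hNn
  have havgt : (n : ℝ)⁻¹ * ∑ k ∈ range n, ‖s (a m) k - L m‖ ^ p < η ^ p := by
    refine lt_of_le_of_lt (le_abs_self _) hNn
  have hbound : (n : ℝ)⁻¹ * ∑ k ∈ range n, ‖s A k - Llim‖ ^ p ≤
      2 ^ p * δ ^ p + 2 ^ p * ((n : ℝ)⁻¹ * ∑ k ∈ range n, ‖s (a m) k - L m‖ ^ p) := by
    have hsum : ∑ k ∈ range n, ‖s A k - Llim‖ ^ p ≤
        ∑ k ∈ range n, (2 ^ p * δ ^ p + 2 ^ p * ‖s (a m) k - L m‖ ^ p) :=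
      Finset.sum_le_sum fun k _ => hterm k
    have hinv : (0:ℝ) ≤ (n : ℝ)⁻¹ := by positivity
    calc (n : ℝ)⁻¹ * ∑ k ∈ range n, ‖s A k - Llim‖ ^ p
        ≤ (n : ℝ)⁻¹ * ∑ k ∈ range n, (2 ^ p * δ ^ p + 2 ^ p * ‖s (a m) k - L m‖ ^ p) :=
          mul_le_mul_of_nonneg_left hsum hinv
      _ = ((n : ℝ)⁻¹ * n) * (2 ^ p * δ ^ p) +
          2 ^ p * ((n : ℝ)⁻¹ * ∑ k ∈ range n, ‖s (a m) k - L m‖ ^ p) := by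
          rw [Finset.sum_add_distrib, Finset.sum_const, Finset.card_range, nsmul_eq_mul, ← Finset.mul_sum]
          ring
      _ ≤ 2 ^ p * δ ^ p +
          2 ^ p * ((n : ℝ)⁻¹ * ∑ k ∈ range n, ‖s (a m) k - L m‖ ^ p) := by
          have hle1 : (n : ℝ)⁻¹ * n ≤ 1 := by
            rcases Nat.eq_zero_or_pos n with h | h
            · simp [h]
            · rw [inv_mul_cancel₀ (by exact_mod_cast h.ne' : (n:ℝ) ≠ 0)]
          have : ((n : ℝ)⁻¹ * n) * (2 ^ p * δ ^ p) ≤ 1 * (2 ^ p * δ ^ p) :=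
            mul_le_mul_of_nonneg_right hle1 (by positivity)
          linarith
  have h2pt : 2 ^ p * ((n : ℝ)⁻¹ * ∑ k ∈ range n, ‖s (a m) k - L m‖ ^ p) <
      2 ^ p * η ^ p := mul_lt_mul_of_pos_left havgt h2p
  have hfin : 2 ^ p * η ^ p ≤ ε / 2 := by
    rw [hηp]
    calc 2 ^ p * (ε / (2 * 2 ^ p)) = ε / 2 := by field_simp
      _ ≤ ε / 2 := le_refl _
  linarith
end

section
/- Let X be a real Banach space, 0 < p < ∞, and ∑_i x_i a series in X. If c_0 ⊆ S_{w_p}(∑ x_i), i.e., for every null sequence (a_i) the partial sums ∑_{i=1}^n a_i x_i are strongly p-Cesàro summable, then ∑_i x_i is weakly unconditionally Cauchy. -/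
open Filter Finset

lemma sqrt_diff_le {a b : ℝ} (ha : 0 ≤ a) (hab : a ≤ b) (hb : 1 ≤ b) :
    Real.sqrt b - Real.sqrt a ≤ (Real.sqrt b)⁻¹ * (b - a) := by
  have hbpos : 0 < Real.sqrt b := Real.sqrt_pos.2 (by linarith)
  rw [inv_mul_eq_div, le_div_iff₀ hbpos]
  nlinarith [Real.sq_sqrt (le_trans ha hab), Real.sq_sqrt ha,
    Real.sqrt_le_sqrt hab, Real.sqrt_nonneg a]

lemma tendsto_sqrt_atTop' : Tendsto Real.sqrt atTop atTop := by
  apply tendsto_atTop_atTop.2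
  intro b
  refine ⟨b ^ 2, fun a ha => ?_⟩
  calc b ≤ |b| := le_abs_self b
  _ = Real.sqrt (b ^ 2) := (Real.sqrt_sq_eq_abs b).symm
  _ ≤ Real.sqrt a := Real.sqrt_le_sqrt ha

theorem statement10 {X : Type*} [NormedAddCommGroup X] [NormedSpace ℝ X] [CompleteSpace X]
    (p : ℝ) (hp : 0 < p) (x : ℕ → X)
    (hc0 : ∀ a : ℕ → ℝ, Tendsto a atTop (nhds 0) →
      ∃ L : X, StrongCesaro p (fun n => ∑ i ∈ range n, a i • x i) L) :
    ∀ f : X →L[ℝ] ℝ, Summable fun i => |f (x i)| := by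
  intro f
  by_contra hns
  set S : ℕ → ℝ := fun n => ∑ k ∈ range n, |f (x k)| with hSdef
  have hSnn : ∀ n, 0 ≤ S n := fun n => Finset.sum_nonneg fun i _ => abs_nonneg _
  have hStop : Tendsto S atTop atTop :=
    (not_summable_iff_tendsto_nat_atTop_of_nonneg (fun i => abs_nonneg _)).1 hns
  set c : ℕ → ℝ := fun i => (Real.sqrt (1 + S (i + 1)))⁻¹ with hcdef
  have hc_pos : ∀ i, 0 < c i := fun i =>
    inv_pos.2 (Real.sqrt_pos.2 (by linarith [hSnn (i + 1)]))
  set a : ℕ → ℝ := fun i => if 0 ≤ f (x i) then c i else -(c i) with hadef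
  -- a tends to 0
  have hc0' : Tendsto c atTop (nhds 0) := by
    apply Tendsto.inv_tendsto_atTop
    exact tendsto_sqrt_atTop'.comp
      ((tendsto_atTop_add_const_left _ 1 (hStop.comp (tendsto_add_atTop_nat 1))))
  have ha0 : Tendsto a atTop (nhds 0) := by
    have h1 : ∀ i, -(c i) ≤ a i := by
      intro i; by_cases h : 0 ≤ f (x i) <;> simp [hadef, h] <;> linarith [hc_pos i]
    have h2 : ∀ i, a i ≤ c i := by
      intro i; by_cases h : 0 ≤ f (x i) <;> simp [hadef, h] <;> linarith [hc_pos i]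
    have : Tendsto (fun i => -(c i)) atTop (nhds (-0)) := hc0'.neg
    rw [neg_zero] at this
    exact tendsto_of_tendsto_of_tendsto_of_le_of_le this hc0' h1 h2
  obtain ⟨L, hL⟩ := hc0 a ha0
  set P : ℕ → X := fun n => ∑ i ∈ range n, a i • x i with hPdef
  set T : ℕ → ℝ := fun n => ∑ i ∈ range n, c i * |f (x i)| with hTdef
  have hfP : ∀ n, f (P n) = T n := by
    intro n
    rw [hPdef, map_sum]
    refine Finset.sum_congr rfl fun i _ => ?_
    rw [map_smul]
    by_cases h : 0 ≤ f (x i)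
    · simp [hadef, h, abs_of_nonneg h]
    · push_neg at h
      simp [hadef, not_le.2 h, abs_of_neg h]
  -- T tends to atTop
  have hT_lb : ∀ n, Real.sqrt (1 + S n) - 1 ≤ T n := by
    intro n
    have htel : ∑ i ∈ range n,
        (Real.sqrt (1 + S (i + 1)) - Real.sqrt (1 + S i)) = Real.sqrt (1 + S n) - Real.sqrt (1 + S 0) :=
      Finset.sum_range_sub (fun i => Real.sqrt (1 + S i)) n
    have hS0 : S 0 = 0 := by simp [hSdef]
    rw [hS0] at htel
    simp only [add_zero, Real.sqrt_one] at htel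
    rw [← htel]
    apply Finset.sum_le_sum
    intro i _
    have hstep : S (i + 1) = S i + |f (x i)| := by
      simp [hSdef, Finset.sum_range_succ]
    have := sqrt_diff_le (a := 1 + S i) (b := 1 + S (i + 1))
      (by linarith [hSnn i]) (by rw [hstep]; linarith [abs_nonneg (f (x i))])
      (by linarith [hSnn (i + 1)])
    have heq : (1 + S (i + 1)) - (1 + S i) = |f (x i)| := by rw [hstep]; ring
    rw [heq] at this
    exact this
  have hTtop : Tendsto T atTop atTop := by
    apply tendsto_atTop_mono hT_lb
    apply tendsto_atTop_add_const_right
    exact tendsto_sqrt_atTop'.comp (tendsto_atTop_add_const_left _ 1 hStop)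
  -- norm of f positive
  have hM : 0 < ‖f‖ := by
    rcases eq_or_lt_of_le (norm_nonneg f) with h | h
    · exfalso
      have hf0 : f = 0 := by rwa [eq_comm, norm_eq_zero] at h
      apply hns
      simp [hf0]
    · exact h
  set ε : ℝ := ‖f‖⁻¹ with hεdef
  have hεpos : 0 < ε := inv_pos.2 hM
  obtain ⟨N, hN⟩ := (hTtop.eventually_ge_atTop (f L + 1)).exists_forall_of_atTop
  have hPL : ∀ n, N ≤ n → ε ≤ ‖P n - L‖ := by
    intro n hn
    have h1 : 1 ≤ f (P n) - f L := by
      have := hN n hn; rw [hfP n]; linarith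
    have h2 : 1 ≤ |f (P n - L)| := by
      rw [map_sub]; exact le_trans h1 (le_abs_self _)
    have h3 : |f (P n - L)| ≤ ‖f‖ * ‖P n - L‖ := by
      rw [← Real.norm_eq_abs]; exact f.le_opNorm _
    have h4 : 1 ≤ ‖f‖ * ‖P n - L‖ := le_trans h2 h3
    have := mul_le_mul_of_nonneg_left h4 (le_of_lt hεpos)
    rwa [mul_one, hεdef, ← mul_assoc, inv_mul_cancel₀ hM.ne', one_mul] at this
  -- contradiction with Cesàro convergence
  have hle : ∀ᶠ n : ℕ in atTop, (1 - (N : ℝ) / n) * ε ^ p ≤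
      (n : ℝ)⁻¹ * ∑ k ∈ range n, ‖P k - L‖ ^ p := by
    filter_upwards [eventually_ge_atTop (N + 1)] with n hn
    have hn0 : 0 < n := lt_of_lt_of_le (Nat.succ_pos N) hn
    have hNn : N ≤ n := le_trans (Nat.le_succ N) hn
    have hsum : ((n - N : ℕ) : ℝ) * ε ^ p ≤ ∑ k ∈ range n, ‖P k - L‖ ^ p := by
      calc ((n - N : ℕ) : ℝ) * ε ^ p = ∑ _k ∈ Finset.Ico N n, ε ^ p := by
            rw [Finset.sum_const, Nat.card_Ico, nsmul_eq_mul]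
        _ ≤ ∑ k ∈ Finset.Ico N n, ‖P k - L‖ ^ p := by
            apply Finset.sum_le_sum
            intro k hk
            exact Real.rpow_le_rpow (le_of_lt hεpos) (hPL k (Finset.mem_Ico.1 hk).1) hp.le
        _ ≤ ∑ k ∈ range n, ‖P k - L‖ ^ p := by
            apply Finset.sum_le_sum_of_subset_of_nonneg
            · intro k hk
              rw [Finset.mem_range]; exact (Finset.mem_Ico.1 hk).2
            · intro k _ _; exact Real.rpow_nonneg (norm_nonneg _) p
    have heq : (1 - (N : ℝ) / n) * ε ^ p = (n : ℝ)⁻¹ * (((n - N : ℕ) : ℝ) * ε ^ p) := by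
      rw [Nat.cast_sub hNn]
      have : (n : ℝ) ≠ 0 := Nat.cast_ne_zero.2 hn0.ne'
      field_simp
    rw [heq]
    exact mul_le_mul_of_nonneg_left hsum (inv_nonneg.2 (Nat.cast_nonneg n))
  have hlim : Tendsto (fun n : ℕ => (1 - (N : ℝ) / n) * ε ^ p) atTop (nhds ((1 - 0) * ε ^ p)) :=
    ((tendsto_const_nhds.sub (tendsto_const_div_atTop_nhds_zero_nat (N : ℝ))).mul tendsto_const_nhds)
  have hfinal : (1 - 0) * ε ^ p ≤ 0 := le_of_tendsto_of_tendsto hlim hL hle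
  have : 0 < ε ^ p := Real.rpow_pos_of_pos hεpos p
  linarith
end

section
/- Let X be a real normed space that is not complete. Then there exists a weakly unconditionally Cauchy series ∑_n y_n in X (with ‖y_n‖ < 2^{-n}) such that the sequence of partial sums S_N = ∑_{n=1}^N (1/n) y_n is not strongly p-Cesàro summable to any element of X, for any p ≥ 1. -/
open Filter Finset

theorem statement13 {X : Type*} [NormedAddCommGroup X] [NormedSpace ℝ X]
    (hX : ¬ CompleteSpace X) :
    ∃ y : ℕ → X,
      (∀ n : ℕ, ‖y n‖ < (2 : ℝ)⁻¹ ^ (n + 1)) ∧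
      (∀ f : X →L[ℝ] ℝ, Summable fun n => |f (y n)|) ∧
      ∀ p : ℝ, 1 ≤ p → ∀ L : X,
        ¬ StrongCesaro p (fun N => ∑ n ∈ range N, ((n : ℝ) + 1)⁻¹ • y n) L := by
  -- get a Cauchy sequence with no limit
  obtain ⟨u, hu, hnc⟩ : ∃ u : ℕ → X, CauchySeq u ∧ ∀ a : X, ¬ Tendsto u atTop (nhds a) := by
    by_contra h
    push_neg at h
    exact hX (Metric.complete_of_cauchySeq_tendsto fun u hu => h u hu)
  -- an extraction with small increments
  set ε : ℕ → ℝ := fun n => (2 : ℝ)⁻¹ ^ (n + 1) / ((n : ℝ) + 1) with hε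
  have hεpos : ∀ n, 0 < ε n := fun n => by positivity
  obtain ⟨φ, hφ, hd⟩ := hu.subseq_mem (V := fun n => {p : X × X | dist p.1 p.2 < ε n})
    (fun n => Metric.dist_mem_uniformity (hεpos n))
  set x : ℕ → X := fun n => u (φ (n + 1)) - u (φ n) with hx
  have hxnorm : ∀ n, ‖x n‖ < ε n := fun n => by
    simpa [hx, dist_eq_norm] using hd n
  set y : ℕ → X := fun n => ((n : ℝ) + 1) • x n with hy
  have hnpos : ∀ n : ℕ, (0 : ℝ) < (n : ℝ) + 1 := fun n => by positivity
  have hynorm : ∀ n, ‖y n‖ < (2 : ℝ)⁻¹ ^ (n + 1) := by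
    intro n
    have : ‖y n‖ = ((n : ℝ) + 1) * ‖x n‖ := by
      rw [hy, norm_smul, Real.norm_eq_abs, abs_of_pos (hnpos n)]
    rw [this]
    calc ((n : ℝ) + 1) * ‖x n‖ < ((n : ℝ) + 1) * ε n :=
          mul_lt_mul_of_pos_left (hxnorm n) (hnpos n)
      _ = (2 : ℝ)⁻¹ ^ (n + 1) := by
          simp only [hε]
          field_simp
  -- partial sums telescope
  have hsum : ∀ N, ∑ n ∈ range N, ((n : ℝ) + 1)⁻¹ • y n = u (φ N) - u (φ 0) := by
    intro N
    have : ∀ n : ℕ, ((n : ℝ) + 1)⁻¹ • y n = x n := by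
      intro n
      rw [hy, smul_smul, inv_mul_cancel₀ (hnpos n).ne', one_smul]
    simp only [this, hx]
    exact Finset.sum_range_sub (fun n => u (φ n)) N
  refine ⟨y, hynorm, ?_, ?_⟩
  · -- weakly unconditionally Cauchy
    intro f
    have hgeo : Summable fun n : ℕ => ‖f‖ * (2 : ℝ)⁻¹ ^ (n + 1) := by
      have : Summable fun n : ℕ => (2 : ℝ)⁻¹ ^ n :=
        summable_geometric_of_lt_one (by norm_num) (by norm_num)
      simpa [pow_succ, mul_comm, mul_assoc, mul_left_comm] using (this.mul_left (‖f‖ * 2⁻¹))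
    refine Summable.of_nonneg_of_le (fun n => abs_nonneg _) (fun n => ?_) hgeo
    calc |f (y n)| = ‖f (y n)‖ := (Real.norm_eq_abs _).symm
      _ ≤ ‖f‖ * ‖y n‖ := f.le_opNorm _
      _ ≤ ‖f‖ * (2 : ℝ)⁻¹ ^ (n + 1) :=
          mul_le_mul_of_nonneg_left (hynorm n).le (norm_nonneg f)
  · -- not strongly Cesàro
    intro p hp L hC
    have hgeq : (fun N => ∑ n ∈ range N, ((n : ℝ) + 1)⁻¹ • y n)
        = fun N => u (φ N) - u (φ 0) := funext hsum
    simp only [hgeq] at hC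
    set S : ℕ → X := fun N => u (φ N) - u (φ 0) with hS
    have hScauchy : CauchySeq S := by
      have h1 : CauchySeq (fun N => u (φ N)) := hu.comp_tendsto hφ.tendsto_atTop
      exact (uniformContinuous_id.sub uniformContinuous_const).comp_cauchySeq h1
    have hSnotL : ¬ Tendsto S atTop (nhds L) := by
      intro h
      have : Tendsto (fun N => u (φ N)) atTop (nhds (L + u (φ 0))) := by
        have := h.add_const (u (φ 0))
        simpa [hS, sub_add_cancel] using this
      exact hnc (L + u (φ 0)) (tendsto_nhds_of_cauchySeq_of_subseq hu hφ.tendsto_atTop this)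
    -- the sequence ‖S k - L‖ is Cauchy hence converges in ℝ
    have hcauchy : CauchySeq (fun k => ‖S k - L‖) :=
      (uniformContinuous_norm.comp (uniformContinuous_id.sub uniformContinuous_const)
        : UniformContinuous fun a : X => ‖a - L‖).comp_cauchySeq hScauchy
    obtain ⟨c, hc⟩ := cauchySeq_tendsto_of_complete hcauchy
    have hc0 : 0 ≤ c := le_of_tendsto_of_tendsto' tendsto_const_nhds hc (fun k => norm_nonneg _)
    have hcne : c ≠ 0 := by
      intro h
      rw [h] at hc
      exact hSnotL (tendsto_iff_norm_sub_tendsto_zero.mpr hc)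
    have hcpos : 0 < c := lt_of_le_of_ne hc0 (Ne.symm hcne)
    -- Cesàro means converge to c ^ p
    have hrpow : Tendsto (fun k => ‖S k - L‖ ^ p) atTop (nhds (c ^ p)) :=
      hc.rpow_const (Or.inl hcne)
    have hces : Tendsto (fun n : ℕ => (n : ℝ)⁻¹ * ∑ k ∈ range n, ‖S k - L‖ ^ p)
        atTop (nhds (c ^ p)) := hrpow.cesaro
    have := tendsto_nhds_unique hces hC
    exact absurd this (Real.rpow_pos_of_pos hcpos p).ne'
end

section
/- Let X be a real Banach space, 0 < p < ∞, and ∑_i x_i a series in X. Then ∑_i x_i is weakly unconditionally Cauchy if and only if the linear map T : S_{w_p}(∑ x_i) → X, T((a_i)) = the strong p-Cesàro limit of the partial sums ∑_{i=1}^n a_i x_i, is continuous (bounded). -/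
open Filter Finset BoundedContinuousFunction

/-- The strong `p`-Cesàro condition implies the sequence is frequently close to `L`. -/
lemma StrongCesaro.frequently_close {X : Type*} [NormedAddCommGroup X] {p : ℝ} (hp : 0 < p)
    {y : ℕ → X} {L : X} (h : StrongCesaro p y L) {ε : ℝ} (hε : 0 < ε) :
    ∃ n : ℕ, ‖y n - L‖ ≤ ε := by
  by_contra hcon
  push_neg at hcon
  have hεp : (0 : ℝ) < ε ^ p := Real.rpow_pos_of_pos hε p
  have hev : ∀ᶠ n : ℕ in atTop, (n : ℝ)⁻¹ * ∑ k ∈ range n, ‖y k - L‖ ^ p < ε ^ p :=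
    h.eventually (gt_mem_nhds hεp)
  obtain ⟨n, hn1, hn2⟩ := (hev.and (eventually_ge_atTop 1)).exists
  have hterm : ∀ k ∈ range n, ε ^ p ≤ ‖y k - L‖ ^ p := fun k _ =>
    Real.rpow_le_rpow hε.le (hcon k).le hp.le
  have hsum : (n : ℝ) * ε ^ p ≤ ∑ k ∈ range n, ‖y k - L‖ ^ p := by
    calc (n : ℝ) * ε ^ p = ∑ _k ∈ range n, ε ^ p := by
          rw [Finset.sum_const, card_range, nsmul_eq_mul]
      _ ≤ _ := Finset.sum_le_sum hterm
  have hnpos : (0 : ℝ) < (n : ℝ) := by exact_mod_cast hn2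
  have : ε ^ p ≤ (n : ℝ)⁻¹ * ∑ k ∈ range n, ‖y k - L‖ ^ p := by
    rw [inv_mul_eq_div, le_div_iff₀ hnpos]
    linarith [hsum]
  exact absurd hn1 (not_lt.2 this)

theorem statement14 {X : Type*} [NormedAddCommGroup X] [NormedSpace ℝ X] [CompleteSpace X]
    (p : ℝ) (hp : 0 < p) (x : ℕ → X) :
    (∀ f : X →L[ℝ] ℝ, Summable fun i => |f (x i)|) ↔
      ∃ C : ℝ, 0 ≤ C ∧ ∀ (a : ℕ →ᵇ ℝ) (L : X),
        StrongCesaro p (fun n => ∑ i ∈ range n, a i • x i) L → ‖L‖ ≤ C * ‖a‖ := by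
  constructor
  · intro h
    -- Banach–Steinhaus: uniform bound on sign-bounded partial sums
    obtain ⟨C', hC'⟩ := banach_steinhaus
      (g := fun q : {a : ℕ → ℝ // ∀ i, |a i| ≤ 1} × ℕ =>
        NormedSpace.inclusionInDoubleDual ℝ X (∑ i ∈ range q.2, q.1.1 i • x i))
      (by
        intro f
        refine ⟨∑' i, |f (x i)|, fun q => ?_⟩
        simp only [NormedSpace.dual_def, Real.norm_eq_abs]
        calc |f (∑ i ∈ range q.2, q.1.1 i • x i)|
            = |∑ i ∈ range q.2, q.1.1 i * f (x i)| := by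
              rw [map_sum]; simp [mul_comm]
          _ ≤ ∑ i ∈ range q.2, |q.1.1 i * f (x i)| := Finset.abs_sum_le_sum_abs _ _
          _ ≤ ∑ i ∈ range q.2, |f (x i)| := by
              refine Finset.sum_le_sum fun i _ => ?_
              rw [abs_mul]
              exact mul_le_of_le_one_left (abs_nonneg _) (q.1.2 i)
          _ ≤ ∑' i, |f (x i)| := Summable.sum_le_tsum _ (fun i _ => abs_nonneg _) (h f))
    set C : ℝ := max C' 0 with hCdef
    have hC0 : 0 ≤ C := le_max_right _ _
    -- Bound for sign-bounded coefficient sequences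
    have hbound : ∀ (a : ℕ → ℝ), (∀ i, |a i| ≤ 1) → ∀ n : ℕ,
        ‖∑ i ∈ range n, a i • x i‖ ≤ C := by
      intro a ha n
      refine NormedSpace.norm_le_dual_bound ℝ _ hC0 fun f => ?_
      have := (hC' (⟨a, ha⟩, n)).trans (le_max_left C' 0)
      calc ‖f (∑ i ∈ range n, a i • x i)‖
          = ‖NormedSpace.inclusionInDoubleDual ℝ X (∑ i ∈ range n, a i • x i) f‖ := rfl
        _ ≤ ‖NormedSpace.inclusionInDoubleDual ℝ X (∑ i ∈ range n, a i • x i)‖ * ‖f‖ :=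
            ContinuousLinearMap.le_opNorm _ _
        _ ≤ C * ‖f‖ := by
            exact mul_le_mul_of_nonneg_right this (norm_nonneg f)
    -- Bound for arbitrary bounded coefficient sequences
    have hbound' : ∀ (a : ℕ →ᵇ ℝ) (n : ℕ), ‖∑ i ∈ range n, a i • x i‖ ≤ C * ‖a‖ := by
      intro a n
      rcases eq_or_ne ‖a‖ 0 with h0 | h0
      · have : a = 0 := norm_eq_zero.mp h0
        simp [this, h0]
      have hapos : 0 < ‖a‖ := (norm_nonneg a).lt_of_ne' h0
      have hb : ∀ i, |(‖a‖⁻¹ * a i)| ≤ 1 := by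
        intro i
        rw [abs_mul, abs_inv, abs_norm]
        rw [inv_mul_le_iff₀ hapos, mul_one]
        exact a.norm_coe_le_norm i
      have := hbound (fun i => ‖a‖⁻¹ * a i) hb n
      have hsum : ∑ i ∈ range n, (‖a‖⁻¹ * a i) • x i
          = ‖a‖⁻¹ • ∑ i ∈ range n, a i • x i := by
        rw [Finset.smul_sum]
        exact Finset.sum_congr rfl fun i _ => by rw [smul_smul]
      rw [hsum, norm_smul, norm_inv, norm_norm] at this
      calc ‖∑ i ∈ range n, a i • x i‖
          = ‖a‖ * (‖a‖⁻¹ * ‖∑ i ∈ range n, a i • x i‖) := by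
            rw [← mul_assoc, mul_inv_cancel₀ h0, one_mul]
        _ ≤ ‖a‖ * C := mul_le_mul_of_nonneg_left this (norm_nonneg a)
        _ = C * ‖a‖ := mul_comm _ _
    refine ⟨C, hC0, fun a L hL => ?_⟩
    refine le_of_forall_pos_le_add fun ε hε => ?_
    obtain ⟨n, hn⟩ := hL.frequently_close hp hε
    calc ‖L‖ ≤ ‖∑ i ∈ range n, a i • x i‖ + ‖(∑ i ∈ range n, a i • x i) - L‖ := by
          calc ‖L‖ = ‖(∑ i ∈ range n, a i • x i) - ((∑ i ∈ range n, a i • x i) - L)‖ := by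
                rw [sub_sub_cancel]
            _ ≤ _ := norm_sub_le _ _
      _ ≤ C * ‖a‖ + ε := add_le_add (hbound' a n) hn
  · rintro ⟨C, hC0, hC⟩ f
    refine summable_of_sum_range_le (c := ‖f‖ * C) (fun i => abs_nonneg _) fun n => ?_
    -- coefficients: signs of f (x i) up to n, 0 afterwards
    set s : ℕ → ℝ := fun i => if i < n then Real.sign (f (x i)) else 0 with hsdef
    have hs1 : ∀ i, ‖s i‖ ≤ 1 := by
      intro i
      rw [hsdef]
      dsimp only
      split
      · rcases lt_trichotomy (f (x i)) 0 with h | h | h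
        · rw [Real.sign_of_neg h]; simp
        · rw [h, Real.sign_zero]; simp
        · rw [Real.sign_of_pos h]; simp
      · simp
    set a : ℕ →ᵇ ℝ := BoundedContinuousFunction.ofNormedAddCommGroupDiscrete s 1 hs1 with hadef
    have ha : ∀ i, a i = s i := fun i => rfl
    have hanorm : ‖a‖ ≤ 1 :=
      BoundedContinuousFunction.norm_ofNormedAddCommGroup_le _ zero_le_one hs1
    set S : X := ∑ i ∈ range n, Real.sign (f (x i)) • x i with hSdef
    have hstab : ∀ m : ℕ, n ≤ m → ∑ i ∈ range m, a i • x i = S := by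
      intro m hm
      rw [hSdef]
      rw [← Finset.sum_subset (Finset.range_subset_range.2 hm)
        (fun i _ hin => by
          rw [ha, hsdef]
          simp only [Finset.mem_range, not_lt] at hin
          simp [Nat.not_lt.2 hin])]
      exact Finset.sum_congr rfl fun i hi => by
        rw [ha, hsdef]; simp [Finset.mem_range.mp hi]
    -- the partial-sum sequence is eventually constant equal to S, so strongly Cesàro to S
    have hces : StrongCesaro p (fun m => ∑ i ∈ range m, a i • x i) S := by
      unfold StrongCesaro
      set B : ℝ := ∑ k ∈ range n, ‖(∑ i ∈ range k, a i • x i) - S‖ ^ p with hBdef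
      have heq : ∀ᶠ m : ℕ in atTop,
          (m : ℝ)⁻¹ * B = (m : ℝ)⁻¹ * ∑ k ∈ range m, ‖(∑ i ∈ range k, a i • x i) - S‖ ^ p := by
        filter_upwards [eventually_ge_atTop n] with m hm
        congr 1
        rw [hBdef]
        refine Finset.sum_subset (Finset.range_subset_range.2 hm) fun k _ hk => ?_
        simp only [Finset.mem_range, not_lt] at hk
        rw [hstab k hk, sub_self, norm_zero, Real.zero_rpow hp.ne']
      have hlim : Tendsto (fun m : ℕ => (m : ℝ)⁻¹ * B) atTop (nhds 0) := by
        have := tendsto_inv_atTop_nhds_zero_nat.mul_const B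
        simpa using this
      exact Tendsto.congr' heq hlim
    have hSle : ‖S‖ ≤ C := by
      have := hC a S (by simpa using hces)
      calc ‖S‖ ≤ C * ‖a‖ := this
        _ ≤ C * 1 := mul_le_mul_of_nonneg_left hanorm hC0
        _ = C := mul_one C
    have hfS : f S = ∑ i ∈ range n, |f (x i)| := by
      rw [hSdef, map_sum]
      refine Finset.sum_congr rfl fun i _ => ?_
      rw [map_smul, smul_eq_mul]
      rcases lt_trichotomy (f (x i)) 0 with h | h | h
      · rw [Real.sign_of_neg h, abs_of_neg h]; ring
      · rw [h, Real.sign_zero, abs_zero, mul_zero]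
      · rw [Real.sign_of_pos h, abs_of_pos h, one_mul]
    calc ∑ i ∈ range n, |f (x i)| = f S := hfS.symm
      _ ≤ |f S| := le_abs_self _
      _ ≤ ‖f‖ * ‖S‖ := f.le_opNorm S
      _ ≤ ‖f‖ * C := mul_le_mul_of_nonneg_left hSle (norm_nonneg f)
end

section
/- Let X be a real normed space, 0 < p < ∞, and ∑_i f_i a weakly unconditionally Cauchy series in the dual space X*. Then for every bounded real sequence (a_i) ∈ ℓ_∞, the partial sums ∑_{i=1}^n a_i f_i are weak* strongly p-Cesàro summable to some f ∈ X*; that is, S_{w*-w_p}(∑ f_i) = ℓ_∞. -/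
open Filter Finset

theorem statement16 {X : Type*} [NormedAddCommGroup X] [NormedSpace ℝ X]
    (p : ℝ) (hp : 0 < p) (f : ℕ → X →L[ℝ] ℝ)
    (hwuc : ∀ φ : (X →L[ℝ] ℝ) →L[ℝ] ℝ, Summable fun i => |φ (f i)|) :
    ∀ a : ℕ → ℝ, (∃ C : ℝ, ∀ i, |a i| ≤ C) →
      ∃ g : X →L[ℝ] ℝ, ∀ v : X,
        Tendsto (fun n : ℕ =>
            (n : ℝ)⁻¹ * ∑ k ∈ range n, |(∑ i ∈ range k, a i • f i) v - g v| ^ p)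
          atTop (nhds 0) := by
  rintro a ⟨C, hC⟩
  -- pointwise absolute summability
  have hsum : ∀ v : X, Summable fun i => |(f i) v| := fun v => by
    simpa using hwuc (NormedSpace.inclusionInDoubleDual ℝ X v)
  have hsum' : ∀ v : X, Summable fun i => a i * (f i) v := by
    intro v
    apply Summable.of_abs
    refine Summable.of_nonneg_of_le (fun i => abs_nonneg _) (fun i => ?_)
      ((hsum v).mul_left C)
    rw [abs_mul]
    exact mul_le_mul_of_nonneg_right (hC i) (abs_nonneg _)
  -- Banach–Steinhaus on the dual of the dual
  set J := NormedSpace.inclusionInDoubleDual ℝ (X →L[ℝ] ℝ) with hJ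
  set T :=
    fun k : ℕ => ∑ i ∈ range k, a i • J (f i) with hT
  have hTapp : ∀ (k : ℕ) (φ : StrongDual ℝ (StrongDual ℝ X)),
      T k φ = ∑ i ∈ range k, a i * φ (f i) := by
    intro k φ
    simp [hT, hJ]
  have hpt : ∀ φ : StrongDual ℝ (StrongDual ℝ X),
      ∃ M, ∀ k, ‖T k φ‖ ≤ M := by
    intro φ
    refine ⟨∑' i, C * |φ (f i)|, fun k => ?_⟩
    rw [hTapp]
    calc ‖∑ i ∈ range k, a i * φ (f i)‖
        ≤ ∑ i ∈ range k, |a i * φ (f i)| := by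
          simpa using Finset.abs_sum_le_sum_abs (fun i => a i * φ (f i)) (range k)
      _ ≤ ∑ i ∈ range k, C * |φ (f i)| := by
          refine Finset.sum_le_sum fun i _ => ?_
          rw [abs_mul]
          exact mul_le_mul_of_nonneg_right (hC i) (abs_nonneg _)
      _ ≤ ∑' i, C * |φ (f i)| := by
          refine Summable.sum_le_tsum (range k) (fun i _ => ?_) ((hwuc φ).mul_left C)
          exact mul_nonneg (le_trans (abs_nonneg _) (hC 0)) (abs_nonneg _)
  obtain ⟨M, hM⟩ := banach_steinhaus (g := T) hpt
  -- uniform bound on partial sums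
  have hSbound : ∀ (k : ℕ) (v : X), |∑ i ∈ range k, a i * (f i) v| ≤ M * ‖v‖ := by
    intro k v
    have h1 : T k (NormedSpace.inclusionInDoubleDual ℝ X v)
        = ∑ i ∈ range k, a i * (f i) v := by
      rw [hTapp]; rfl
    calc |∑ i ∈ range k, a i * (f i) v|
        = ‖T k (NormedSpace.inclusionInDoubleDual ℝ X v)‖ := by rw [h1]; rfl
      _ ≤ ‖T k‖ * ‖NormedSpace.inclusionInDoubleDual ℝ X v‖ :=
          (T k).le_opNorm _
      _ ≤ M * ‖v‖ := by
          have := NormedSpace.double_dual_bound ℝ X v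
          have h2 := hM k
          have h3 : (0:ℝ) ≤ ‖T k‖ := (T k).opNorm_nonneg
          nlinarith [norm_nonneg (NormedSpace.inclusionInDoubleDual ℝ X v)]
  -- the limit functional
  let L : X →ₗ[ℝ] ℝ :=
    { toFun := fun v => ∑' i, a i * (f i) v
      map_add' := by
        intro v w
        simp only [map_add, mul_add]
        exact Summable.tsum_add (hsum' v) (hsum' w)
      map_smul' := by
        intro c v
        simp only [map_smul, smul_eq_mul, RingHom.id_apply]
        rw [← tsum_mul_left]
        congr 1
        ext i
        ring }
  have hLbound : ∀ v : X, ‖L v‖ ≤ M * ‖v‖ := by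
    intro v
    have htend : Tendsto (fun k => ∑ i ∈ range k, a i * (f i) v) atTop
        (nhds (∑' i, a i * (f i) v)) := (hsum' v).hasSum.tendsto_sum_nat
    have : Tendsto (fun k => |∑ i ∈ range k, a i * (f i) v|) atTop
        (nhds |∑' i, a i * (f i) v|) := htend.abs
    exact le_of_tendsto this (Eventually.of_forall fun k => hSbound k v)
  refine ⟨L.mkContinuous M hLbound, fun v => ?_⟩
  have hg : (L.mkContinuous M hLbound) v = ∑' i, a i * (f i) v := rfl
  have hu : Tendsto (fun k : ℕ =>
      |(∑ i ∈ range k, a i • f i) v - (L.mkContinuous M hLbound) v| ^ p)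
      atTop (nhds 0) := by
    have htend : Tendsto (fun k => ∑ i ∈ range k, a i * (f i) v) atTop
        (nhds (∑' i, a i * (f i) v)) := (hsum' v).hasSum.tendsto_sum_nat
    have h1 : Tendsto (fun k : ℕ =>
        |(∑ i ∈ range k, a i • f i) v - (L.mkContinuous M hLbound) v|)
        atTop (nhds 0) := by
      rw [hg]
      simp only [ContinuousLinearMap.sum_apply, ContinuousLinearMap.smul_apply,
        smul_eq_mul]
      simpa using (htend.sub_const (∑' i, a i * (f i) v)).abs
    have h2 := h1.rpow_const (p := p) (Or.inr hp.le)
    simpa [Real.zero_rpow hp.ne'] using h2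
  simpa using hu.cesaro
end

section
/- Let X be a barrelled normed space, 0 < p < ∞, and ∑_i f_i a series in X*. Suppose that for every x ∈ X and every M ⊆ ℕ, the sequence of partial sums of ∑_{i∈M} f_i(x) is strongly p-Cesàro summable to some real number. Then ∑_i f_i is weakly unconditionally Cauchy. -/
open Filter Finset

lemma not_strongCesaro_atTop {p : ℝ} (hp : 0 < p) {S : ℕ → ℝ}
    (hS : Tendsto S atTop atTop) (L : ℝ) : ¬ StrongCesaro p S L := by
  intro hC
  obtain ⟨N, hN⟩ := (hS.eventually_ge_atTop (L + 1)).exists_forall_of_atTop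
  have hterm : ∀ k, N ≤ k → (1 : ℝ) ≤ ‖S k - L‖ ^ p := by
    intro k hk
    have h1 : (1 : ℝ) ≤ ‖S k - L‖ := by
      have hk' := hN k hk
      rw [Real.norm_eq_abs]
      have h2 : (1 : ℝ) ≤ S k - L := by linarith
      exact h2.trans (le_abs_self _)
    calc (1:ℝ) = 1 ^ p := (Real.one_rpow p).symm
      _ ≤ ‖S k - L‖ ^ p := Real.rpow_le_rpow (by norm_num) h1 hp.le
  have hlow : ∀ n, 2 * N + 2 ≤ n →
      (1 : ℝ) / 2 ≤ (n : ℝ)⁻¹ * ∑ k ∈ range n, ‖S k - L‖ ^ p := by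
    intro n hn
    have hNn : N ≤ n := by omega
    have hpos : (0 : ℝ) < (n : ℝ) := by
      have : 0 < n := by omega
      exact_mod_cast this
    have h1 : ((n : ℝ) - (N : ℝ)) ≤ ∑ k ∈ range n, ‖S k - L‖ ^ p := by
      have ha : ∑ k ∈ Finset.Ico N n, (1 : ℝ) ≤ ∑ k ∈ Finset.Ico N n, ‖S k - L‖ ^ p :=
        Finset.sum_le_sum (fun k hk => hterm k (Finset.mem_Ico.mp hk).1)
      have hb : ∑ k ∈ Finset.Ico N n, ‖S k - L‖ ^ p ≤ ∑ k ∈ range n, ‖S k - L‖ ^ p := by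
        apply Finset.sum_le_sum_of_subset_of_nonneg
        · intro i hi
          rw [Finset.mem_range]
          exact (Finset.mem_Ico.mp hi).2
        · intro i _ _
          positivity
      have hc : ((n : ℝ) - (N : ℝ)) ≤ ∑ k ∈ Finset.Ico N n, (1 : ℝ) := by
        rw [Finset.sum_const, Nat.card_Ico, nsmul_eq_mul, mul_one]
        rw [Nat.cast_sub hNn]
      linarith
    have hn' : (2 : ℝ) * N + 2 ≤ (n : ℝ) := by exact_mod_cast hn
    rw [inv_mul_eq_div, le_div_iff₀ hpos]
    linarith
  have h2 : ∀ᶠ n : ℕ in atTop,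
      (n : ℝ)⁻¹ * ∑ k ∈ range n, ‖S k - L‖ ^ p < 1 / 2 :=
    hC.eventually_lt_const (show (0:ℝ) < 1/2 by norm_num)
  obtain ⟨n, hn1, hn2⟩ := (h2.and (eventually_atTop.mpr ⟨2 * N + 2, hlow⟩)).exists
  linarith

lemma strongCesaro_neg {p : ℝ} {S : ℕ → ℝ} {L : ℝ} (hC : StrongCesaro p S L) :
    StrongCesaro p (fun n => -(S n)) (-L) := by
  have hkey : ∀ n, ‖-(S n) - -L‖ = ‖S n - L‖ := by
    intro n
    rw [← norm_neg]
    ring_nf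
  unfold StrongCesaro at *
  simpa only [hkey] using hC

lemma bdd_of_monotone_strongCesaro {p : ℝ} (hp : 0 < p) {S : ℕ → ℝ}
    (hm : Monotone S) {L : ℝ} (hC : StrongCesaro p S L) : ∃ C, ∀ n, S n ≤ C := by
  by_contra hb
  push_neg at hb
  have hS : Tendsto S atTop atTop :=
    tendsto_atTop_atTop_of_monotone hm (fun b => (hb b).imp (fun n hn => hn.le))
  exact not_strongCesaro_atTop hp hS L hC

lemma bdd_filter_sum {p : ℝ} (hp : 0 < p) (M : Set ℕ) [DecidablePred (· ∈ M)] (g : ℕ → ℝ)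
    (hg : ∀ i, i ∈ M → 0 ≤ g i) {L : ℝ}
    (hC : StrongCesaro p (fun n => ∑ i ∈ (range n).filter (fun i => i ∈ M), g i) L) :
    ∃ C, ∀ n, ∑ i ∈ (range n).filter (fun i => i ∈ M), g i ≤ C := by
  apply bdd_of_monotone_strongCesaro hp ?_ hC
  intro a b hab
  apply Finset.sum_le_sum_of_subset_of_nonneg
    (Finset.filter_subset_filter _ (Finset.range_subset_range.mpr hab))
  intro i hi _
  exact hg i (Finset.mem_filter.mp hi).2

lemma bdd_below_filter_sum {p : ℝ} (hp : 0 < p) (M : Set ℕ) [DecidablePred (· ∈ M)] (g : ℕ → ℝ)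
    (hg : ∀ i, i ∈ M → g i ≤ 0) {L : ℝ}
    (hC : StrongCesaro p (fun n => ∑ i ∈ (range n).filter (fun i => i ∈ M), g i) L) :
    ∃ C, ∀ n, C ≤ ∑ i ∈ (range n).filter (fun i => i ∈ M), g i := by
  have hneg := strongCesaro_neg hC
  have hm : Monotone (fun n => -(∑ i ∈ (range n).filter (fun i => i ∈ M), g i)) := by
    intro a b hab
    simp only [neg_le_neg_iff, ← Finset.sum_neg_distrib]
    apply Finset.sum_le_sum_of_subset_of_nonneg
      (Finset.filter_subset_filter _ (Finset.range_subset_range.mpr hab))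
    intro i hi _
    have h0 := hg i (Finset.mem_filter.mp hi).2
    linarith
  obtain ⟨C, hC'⟩ := bdd_of_monotone_strongCesaro hp hm hneg
  refine ⟨-C, fun n => ?_⟩
  have := hC' n
  linarith

lemma abs_sum_bound {g : ℕ → ℝ} {M : Set ℕ} [DecidablePred (· ∈ M)] [DecidablePred (· ∈ Mᶜ)]
    (hM : ∀ i, i ∈ M ↔ 0 ≤ g i) {C1 C2 : ℝ}
    (h1 : ∀ n, ∑ i ∈ (range n).filter (fun i => i ∈ M), g i ≤ C1)
    (h2 : ∀ n, C2 ≤ ∑ i ∈ (range n).filter (fun i => i ∈ Mᶜ), g i) :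
    ∀ n, ∑ i ∈ range n, |g i| ≤ C1 - C2 := by
  intro n
  have hsplit : ∑ i ∈ range n, |g i| =
      (∑ i ∈ (range n).filter (fun i => i ∈ M), |g i|) +
      (∑ i ∈ (range n).filter (fun i => ¬ i ∈ M), |g i|) :=
    (Finset.sum_filter_add_sum_filter_not _ _ _).symm
  have e1 : ∑ i ∈ (range n).filter (fun i => i ∈ M), |g i|
      = ∑ i ∈ (range n).filter (fun i => i ∈ M), g i :=
    Finset.sum_congr rfl fun i hi => abs_of_nonneg ((hM i).mp (Finset.mem_filter.mp hi).2)
  have efilter : (range n).filter (fun i => ¬ i ∈ M) = (range n).filter (fun i => i ∈ Mᶜ) :=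
    Finset.filter_congr fun i _ => by simp [Set.mem_compl_iff]
  have e2 : ∑ i ∈ (range n).filter (fun i => ¬ i ∈ M), |g i|
      = -(∑ i ∈ (range n).filter (fun i => i ∈ Mᶜ), g i) := by
    rw [efilter, ← Finset.sum_neg_distrib]
    refine Finset.sum_congr rfl fun i hi => ?_
    have hi' := (Finset.mem_filter.mp hi).2
    rw [Set.mem_compl_iff, hM i, not_le] at hi'
    exact abs_of_neg hi'
  rw [hsplit, e1, e2]
  have ha := h1 n
  have hb := h2 n
  linarith

open Classical in
theorem statement17 {X : Type*} [NormedAddCommGroup X] [NormedSpace ℝ X]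
    (hbarrelled : ∀ s : Set (X →L[ℝ] ℝ),
      (∀ v : X, ∃ C : ℝ, ∀ g ∈ s, |g v| ≤ C) → ∃ C : ℝ, ∀ g ∈ s, ‖g‖ ≤ C)
    (p : ℝ) (hp : 0 < p) (f : ℕ → X →L[ℝ] ℝ)
    (h : ∀ (v : X) (M : Set ℕ), ∃ L : ℝ,
      StrongCesaro p
        (fun n => ∑ i ∈ (range n).filter (fun i => i ∈ M), (f i) v) L) :
    ∀ φ : (X →L[ℝ] ℝ) →L[ℝ] ℝ, Summable fun i => |φ (f i)| := by
  -- Step 1: for each v, ∑ |f i v| is summable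
  have hsum : ∀ v : X, Summable fun i => |f i v| := by
    intro v
    obtain ⟨L1, hL1⟩ := h v {i | 0 ≤ f i v}
    obtain ⟨L2, hL2⟩ := h v {i | 0 ≤ f i v}ᶜ
    obtain ⟨C1, hC1⟩ := @bdd_filter_sum p hp {i | 0 ≤ f i v}
      (fun a => propDecidable _) (fun i => f i v) (fun i hi => hi) L1 hL1
    obtain ⟨C2, hC2⟩ := @bdd_below_filter_sum p hp ({i | 0 ≤ f i v}ᶜ)
      (fun a => propDecidable _) (fun i => f i v)
      (fun i hi => by
        simp only [Set.mem_compl_iff, Set.mem_setOf_eq, not_le] at hi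
        linarith) L2 hL2
    apply summable_of_sum_range_le (c := C1 - C2) (fun n => abs_nonneg _)
    exact @abs_sum_bound (fun i => f i v) {i | 0 ≤ f i v}
      (fun a => propDecidable _) (fun a => propDecidable _)
      (fun i => Iff.rfl) C1 C2 hC1 hC2
  -- Step 2: uniform bound over sign-combinations via barrelledness
  set s : Set (X →L[ℝ] ℝ) :=
    {g | ∃ (F : Finset ℕ) (ε : ℕ → ℝ), (∀ i, |ε i| ≤ 1) ∧ g = ∑ i ∈ F, ε i • f i} with hs
  have hpt : ∀ v : X, ∃ C : ℝ, ∀ g ∈ s, |g v| ≤ C := by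
    intro v
    refine ⟨∑' i, |f i v|, ?_⟩
    rintro g ⟨F, ε, hε, rfl⟩
    have h1 : ((∑ i ∈ F, ε i • f i) v) = ∑ i ∈ F, ε i * f i v := by
      simp [ContinuousLinearMap.sum_apply, smul_eq_mul]
    rw [h1]
    calc |∑ i ∈ F, ε i * f i v| ≤ ∑ i ∈ F, |ε i * f i v| := Finset.abs_sum_le_sum_abs _ _
      _ ≤ ∑ i ∈ F, |f i v| := by
          apply Finset.sum_le_sum
          intro i _
          rw [abs_mul]
          calc |ε i| * |f i v| ≤ 1 * |f i v| :=
                mul_le_mul_of_nonneg_right (hε i) (abs_nonneg _)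
            _ = |f i v| := one_mul _
      _ ≤ ∑' i, |f i v| := Summable.sum_le_tsum F (fun i _ => abs_nonneg _) (hsum v)
  obtain ⟨C, hC⟩ := hbarrelled s hpt
  -- Step 3: conclude summability of ∑ |φ (f i)|
  intro φ
  apply summable_of_sum_range_le (c := ‖φ‖ * C) (fun n => abs_nonneg _)
  intro n
  set ε : ℕ → ℝ := fun i => if 0 ≤ φ (f i) then 1 else -1 with hε
  have hε1 : ∀ i, |ε i| ≤ 1 := by
    intro i
    simp only [hε]
    split <;> simp
  set g : X →L[ℝ] ℝ := ∑ i ∈ range n, ε i • f i with hg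
  have hgs : g ∈ s := ⟨range n, ε, hε1, rfl⟩
  have h1 : ∑ i ∈ range n, |φ (f i)| = φ g := by
    rw [hg, map_sum]
    apply Finset.sum_congr rfl
    intro i _
    rw [map_smul, smul_eq_mul]
    by_cases h0 : 0 ≤ φ (f i)
    · simp [hε, h0, abs_of_nonneg h0]
    · simp [hε, h0, abs_of_neg (not_le.mp h0)]
  rw [h1]
  calc φ g ≤ |φ g| := le_abs_self _
    _ = ‖φ g‖ := (Real.norm_eq_abs _).symm
    _ ≤ ‖φ‖ * ‖g‖ := φ.le_opNorm g
    _ ≤ ‖φ‖ * C := mul_le_mul_of_nonneg_left (hC g hgs) (norm_nonneg φ)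
end

section
/- Let X be a real Banach space and ∑_i x_i a series in X such that ∑_i |f(x_i)| = +∞ for some f ∈ X*. Then there exists a sequence (a_i) ∈ c_0 with a_i f(x_i) ≥ 0 for all i and ∑_i a_i f(x_i) = +∞; consequently the partial sums ∑_{i=1}^n a_i x_i are not strongly p-Cesàro summable for any 0 < p < ∞. -/
open Filter Finset

theorem statement19 {X : Type*} [NormedAddCommGroup X] [NormedSpace ℝ X] [CompleteSpace X]
    (x : ℕ → X) (f : X →L[ℝ] ℝ) (hf : ¬ Summable fun i => |f (x i)|) :
    ∃ a : ℕ → ℝ, Tendsto a atTop (nhds 0) ∧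
      (∀ i, 0 ≤ a i * f (x i)) ∧
      Tendsto (fun n : ℕ => ∑ i ∈ range n, a i * f (x i)) atTop atTop ∧
      ∀ p : ℝ, 0 < p → ∀ L : X,
        ¬ StrongCesaro p (fun n => ∑ i ∈ range n, a i • x i) L := by
  classical
  set g : ℕ → ℝ := fun i => |f (x i)| with hgdef
  have hg0 : ∀ i, 0 ≤ g i := fun i => abs_nonneg _
  set T : ℕ → ℝ := fun n => ∑ i ∈ range n, g i with hTdef
  have hT : Tendsto T atTop atTop :=
    (not_summable_iff_tendsto_nat_atTop_of_nonneg hg0).mp hf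
  have hT0 : ∀ n, 0 ≤ T n := fun n => Finset.sum_nonneg fun i _ => hg0 i
  have hTsucc : ∀ n, T (n + 1) = T n + g n := fun n => Finset.sum_range_succ g n
  -- square roots
  set s : ℕ → ℝ := fun n => Real.sqrt (1 + T n) with hsdef
  have hs1 : ∀ n, 1 ≤ s n := by
    intro n
    have : (1 : ℝ) = Real.sqrt 1 := (Real.sqrt_one).symm
    rw [this]
    exact Real.sqrt_le_sqrt (by linarith [hT0 n])
  have hs0 : ∀ n, 0 < s n := fun n => lt_of_lt_of_le one_pos (hs1 n)
  set c : ℕ → ℝ := fun i => (s (i + 1))⁻¹ with hcdef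
  have hc0 : ∀ i, 0 < c i := fun i => inv_pos.mpr (hs0 _)
  set a : ℕ → ℝ := fun i => (if 0 ≤ f (x i) then (1 : ℝ) else -1) * c i with hadef
  have haf : ∀ i, a i * f (x i) = g i * c i := by
    intro i
    by_cases h : 0 ≤ f (x i)
    · simp only [hadef, hgdef, if_pos h, abs_of_nonneg h]; ring
    · simp only [hadef, hgdef, if_neg h, abs_of_neg (lt_of_not_ge h)]; ring
  -- key per-step inequality
  have hkey : ∀ i, s (i + 1) - s i ≤ g i * c i := by
    intro i
    have hle : T i ≤ T (i + 1) := by rw [hTsucc]; linarith [hg0 i]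
    have hss : s i ≤ s (i + 1) := Real.sqrt_le_sqrt (by linarith)
    have h1 : (s (i + 1) - s i) * s (i + 1) ≤ g i := by
      have hmul : s (i + 1) * s (i + 1) = 1 + T (i + 1) :=
        Real.mul_self_sqrt (by linarith [hT0 (i + 1)])
      have hmul2 : s i * s i = 1 + T i :=
        Real.mul_self_sqrt (by linarith [hT0 i])
      have : s i * s i ≤ s i * s (i + 1) :=
        mul_le_mul_of_nonneg_left hss (le_of_lt (hs0 i))
      have hg : g i = T (i + 1) - T i := by rw [hTsucc]; ring
      nlinarith [hs0 i, hs0 (i + 1)]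
    calc s (i + 1) - s i ≤ g i / s (i + 1) := by
          rw [le_div_iff₀ (hs0 (i + 1))]; exact h1
      _ = g i * c i := by rw [div_eq_mul_inv]
  -- partial sums bound
  have hsum : ∀ n, s n - 1 ≤ ∑ i ∈ range n, a i * f (x i) := by
    intro n
    have h1 : ∑ i ∈ range n, (s (i + 1) - s i) = s n - s 0 :=
      Finset.sum_range_sub s n
    have h2 : s 0 = 1 := by
      simp only [hsdef]
      have : T 0 = 0 := by simp [hTdef]
      rw [this]; simp
    calc s n - 1 = ∑ i ∈ range n, (s (i + 1) - s i) := by rw [h1, h2]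
      _ ≤ ∑ i ∈ range n, g i * c i := Finset.sum_le_sum fun i _ => hkey i
      _ = ∑ i ∈ range n, a i * f (x i) := by
          exact Finset.sum_congr rfl fun i _ => (haf i).symm
  have hstend : Tendsto s atTop atTop := by
    rw [tendsto_atTop]
    intro b
    filter_upwards [hT.eventually_ge_atTop (b ^ 2)] with n hn
    calc b ≤ |b| := le_abs_self b
      _ = Real.sqrt (b ^ 2) := (Real.sqrt_sq_eq_abs b).symm
      _ ≤ s n := Real.sqrt_le_sqrt (by linarith)
  have hBtend : Tendsto (fun n : ℕ => ∑ i ∈ range n, a i * f (x i)) atTop atTop :=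
    tendsto_atTop_mono hsum (tendsto_atTop_add_const_right atTop (-1) hstend |>.congr
      (fun n => by ring_nf))
  refine ⟨a, ?_, ?_, hBtend, ?_⟩
  · -- a tends to 0
    have hctend : Tendsto c atTop (nhds 0) := by
      have : Tendsto (fun i : ℕ => s (i + 1)) atTop atTop :=
        hstend.comp (tendsto_add_atTop_nat 1)
      exact this.inv_tendsto_atTop
    apply squeeze_zero_norm _ hctend
    intro n
    simp only [hadef, Real.norm_eq_abs, abs_mul]
    by_cases h : 0 ≤ f (x n) <;> simp [h, abs_of_pos (hc0 n)]
  · intro i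
    rw [haf i]
    exact mul_nonneg (hg0 i) (le_of_lt (hc0 i))
  · -- not strongly Cesaro
    intro p hp L hCes
    set S : ℕ → X := fun n => ∑ i ∈ range n, a i • x i with hSdef
    have hfS : ∀ n, f (S n) = ∑ i ∈ range n, a i * f (x i) := by
      intro n
      simp only [hSdef, map_sum, map_smul, smul_eq_mul]
    have hBtend' : Tendsto (fun n => f (S n)) atTop atTop := by
      simp only [hfS]; exact hBtend
    obtain ⟨N, hN⟩ := (hBtend'.eventually_ge_atTop (f L + ‖f‖ + 1)).exists_forall_of_atTop
    have hk1 : ∀ k, N ≤ k → 1 ≤ ‖S k - L‖ := by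
      intro k hk
      have h1 : ‖f‖ + 1 ≤ f (S k - L) := by
        rw [map_sub]; linarith [hN k hk]
      have h2 : f (S k - L) ≤ ‖f‖ * ‖S k - L‖ := by
        calc f (S k - L) ≤ |f (S k - L)| := le_abs_self _
          _ = ‖f (S k - L)‖ := (Real.norm_eq_abs _).symm
          _ ≤ ‖f‖ * ‖S k - L‖ := f.le_opNorm _
      by_contra h
      push_neg at h
      have : ‖f‖ * ‖S k - L‖ ≤ ‖f‖ * 1 :=
        mul_le_mul_of_nonneg_left (le_of_lt h) (norm_nonneg f)
      linarith
    -- eventually the Cesaro average is < 1/2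
    have hev : ∀ᶠ n : ℕ in atTop,
        (n : ℝ)⁻¹ * ∑ k ∈ range n, ‖S k - L‖ ^ p < 1 / 2 :=
      hCes.eventually_lt_const (by norm_num)
    obtain ⟨n, hn1, hn2⟩ := ((eventually_ge_atTop (2 * N + 2)).and hev).exists
    have hn0 : (0 : ℝ) < n := by
      have : 0 < n := by omega
      exact_mod_cast this
    have hsumlb : ((n : ℝ) - N) ≤ ∑ k ∈ range n, ‖S k - L‖ ^ p := by
      have hsub : Finset.Ico N n ⊆ range n := by
        rw [Finset.range_eq_Ico]
        exact Finset.Ico_subset_Ico (Nat.zero_le N) le_rfl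
      have h1 : ∑ k ∈ Finset.Ico N n, ‖S k - L‖ ^ p ≤ ∑ k ∈ range n, ‖S k - L‖ ^ p :=
        Finset.sum_le_sum_of_subset_of_nonneg hsub fun k _ _ =>
          Real.rpow_nonneg (norm_nonneg _) p
      have h2 : ((Finset.Ico N n).card : ℝ) * 1 ≤ ∑ k ∈ Finset.Ico N n, ‖S k - L‖ ^ p := by
        rw [mul_one]
        have := Finset.card_nsmul_le_sum (Finset.Ico N n) (fun k => ‖S k - L‖ ^ p) 1
          (fun k hk => by
            have hk' := (Finset.mem_Ico.mp hk).1
            calc (1 : ℝ) = 1 ^ p := (Real.one_rpow p).symm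
              _ ≤ ‖S k - L‖ ^ p := Real.rpow_le_rpow zero_le_one (hk1 k hk') (le_of_lt hp))
        simpa using this
      have hcard : ((Finset.Ico N n).card : ℝ) = (n : ℝ) - N := by
        rw [Nat.card_Ico]
        have hNn : N ≤ n := by omega
        push_cast [Nat.cast_sub hNn]
        ring
      rw [hcard] at h2
      linarith
    have hfin : (1 : ℝ) / 2 ≤ (n : ℝ)⁻¹ * ∑ k ∈ range n, ‖S k - L‖ ^ p := by
      have h3 : (n : ℝ)⁻¹ * ((n : ℝ) - N) ≤ (n : ℝ)⁻¹ * ∑ k ∈ range n, ‖S k - L‖ ^ p :=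
        mul_le_mul_of_nonneg_left hsumlb (inv_nonneg.mpr (le_of_lt hn0))
      have hNn : (2 * N + 2 : ℝ) ≤ n := by exact_mod_cast hn1
      have h4 : (1 : ℝ) / 2 ≤ (n : ℝ)⁻¹ * ((n : ℝ) - N) := by
        rw [inv_mul_eq_div, le_div_iff₀ hn0]
        linarith
      linarith
    linarith
end
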